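/- arXiv:2602.07601 — 4 statements merged into one kernel-verified Lean document; each statement's English description precedes it below -/
import Mathlib

section
/- Let X ~ CCP(n) with n ≥ 2. Then for all x ≥ 0, Pr[X ≤ n(ln n − x)] ≤ 2e^{-x}. -/
open MeasureTheory ProbabilityTheory

/-- The coupon collector time: the first time `t` such that every coupon in `Fin n`
has appeared among the draws `d 0, ..., d (t-1)`. -/
noncomputable def coverTime {Ω : Type} {n : ℕ} (d : ℕ → Ω → Fin n) (ω : Ω) : ℕ :=
  sInf {t | ∀ j : Fin n, ∃ s < t, d s ω = j}

lemma draw_mem_finset {Ω : Type} [MeasurableSpace Ω] (μ : Measure Ω)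
    {n : ℕ} (d : ℕ → Ω → Fin n) (hmeas : ∀ t, Measurable (d t))
    (hunif : ∀ t j, μ {ω | d t ω = j} = (n : ENNReal)⁻¹)
    (s : ℕ) (E : Finset (Fin n)) :
    μ {ω | d s ω ∈ E} = E.card * (n : ENNReal)⁻¹ := by
  have : {ω | d s ω ∈ E} = ⋃ j ∈ E, {ω | d s ω = j} := by ext ω; simp
  rw [this, measure_biUnion_finset]
  · simp [hunif]
  · intro a _ b _ hab
    simp only [Function.onFun, Set.disjoint_left]
    intro ω ha hb
    exact hab (ha.symm.trans hb)
  · intro j _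
    exact hmeas s (measurableSet_singleton j)

lemma draws_all_mem {Ω : Type} [MeasurableSpace Ω] (μ : Measure Ω)
    {n : ℕ} (d : ℕ → Ω → Fin n) (hmeas : ∀ t, Measurable (d t))
    (hunif : ∀ t j, μ {ω | d t ω = j} = (n : ENNReal)⁻¹)
    (hindep : iIndepFun d μ)
    (t : ℕ) (E : Finset (Fin n)) :
    μ (⋂ s ∈ Finset.range t, {ω | d s ω ∈ E}) = (E.card * (n : ENNReal)⁻¹) ^ t := by
  rw [hindep.meas_biInter (S := Finset.range t) (s := fun s => {ω | d s ω ∈ E})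
    (fun i _ => ⟨(↑E : Set (Fin n)), trivial, rfl⟩)]
  simp [draw_mem_finset μ d hmeas hunif, Finset.prod_const]

lemma second_moment_bound {Ω : Type} [MeasurableSpace Ω] (μ : Measure Ω)
    [IsProbabilityMeasure μ] {ι : Type} [Fintype ι] (B : ι → Set Ω)
    (hB : ∀ i, MeasurableSet (B i)) {p : ℝ} (hp : 0 < p)
    (hmean : ∀ i, (μ (B i)).toReal = p)
    (hcross : ∀ i j, i ≠ j → (μ (B i ∩ B j)).toReal ≤ p ^ 2)
    (hcard : 0 < Fintype.card ι) :
    (μ {ω | ∀ i, ω ∉ B i}).toReal ≤ 1 / ((Fintype.card ι : ℝ) * p) := by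
  classical
  set N : ℝ := (Fintype.card ι : ℝ) with hN
  have hNpos : (0:ℝ) < N := by rw [hN]; exact_mod_cast hcard
  set m : ℝ := N * p with hm
  have hmpos : 0 < m := mul_pos hNpos hp
  set W : Ω → ℝ := fun ω => ∑ i, (B i).indicator 1 ω with hW
  have hmem : MemLp W 2 μ := by
    rw [hW]
    exact memLp_finset_sum Finset.univ fun i _ =>
      memLp_indicator_const 2 (hB i) (1:ℝ) (Or.inr (measure_ne_top μ _))
  have hint : ∀ (B' : Set Ω), MeasurableSet B' → Integrable (B'.indicator (1 : Ω → ℝ)) μ :=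
    fun B' h => (memLp_indicator_const 1 h (1:ℝ)
      (Or.inr (measure_ne_top μ _))).integrable le_rfl
  have hEW : μ[W] = m := by
    rw [hW, integral_finset_sum _ (fun i _ => hint _ (hB i))]
    rw [Finset.sum_congr rfl (fun i _ => (integral_indicator_one (hB i)).trans (hmean i))]
    simp [hm, hN, mul_comm]
  -- second moment
  have hWsq : ∀ ω, W ω ^ 2 = ∑ i, ∑ j, (B i ∩ B j).indicator (1 : Ω → ℝ) ω := by
    intro ω
    rw [hW, sq, Finset.sum_mul_sum]
    refine Finset.sum_congr rfl fun i _ => Finset.sum_congr rfl fun j _ => ?_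
    rw [Set.inter_indicator_one]
    rfl
  have hEW2 : μ[W ^ 2] = ∑ i, ∑ j, (μ (B i ∩ B j)).toReal := by
    have : (W ^ 2) = fun ω => ∑ i, ∑ j, (B i ∩ B j).indicator (1 : Ω → ℝ) ω := by
      funext ω; exact hWsq ω
    rw [this, integral_finset_sum _ (fun i _ => integrable_finset_sum _
      (fun j _ => hint _ ((hB i).inter (hB j))))]
    refine Finset.sum_congr rfl fun i _ => ?_
    rw [integral_finset_sum _ (fun j _ => hint _ ((hB i).inter (hB j)))]
    exact Finset.sum_congr rfl fun j _ => integral_indicator_one ((hB i).inter (hB j))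
  have hvar : variance W μ ≤ m := by
    rw [variance_eq_sub hmem, hEW, hEW2]
    have hbound : ∑ i, ∑ j, (μ (B i ∩ B j)).toReal ≤ N * p + (N^2 - N) * p^2 := by
      have : ∀ i : ι, ∑ j, (μ (B i ∩ B j)).toReal ≤ p + (N - 1) * p^2 := by
        intro i
        rw [← Finset.add_sum_erase _ _ (Finset.mem_univ i)]
        have h1 : (μ (B i ∩ B i)).toReal = p := by rw [Set.inter_self]; exact hmean i
        have h2 : ∑ j ∈ Finset.univ.erase i, (μ (B i ∩ B j)).toReal ≤ (N - 1) * p^2 := by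
          calc ∑ j ∈ Finset.univ.erase i, (μ (B i ∩ B j)).toReal
              ≤ ∑ j ∈ Finset.univ.erase i, p^2 :=
                Finset.sum_le_sum fun j hj => hcross i j (Ne.symm (Finset.ne_of_mem_erase hj))
            _ = (N - 1) * p^2 := by
                rw [Finset.sum_const, Finset.card_erase_of_mem (Finset.mem_univ i)]
                simp [hN, Nat.cast_sub hcard]
        rw [h1]
        linarith
      calc ∑ i, ∑ j, (μ (B i ∩ B j)).toReal ≤ ∑ _i : ι, (p + (N - 1) * p^2) :=
            Finset.sum_le_sum fun i _ => this i
        _ = N * (p + (N - 1) * p^2) := by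
              rw [Finset.sum_const, hN]; simp [nsmul_eq_mul]; ring
        _ = N * p + (N^2 - N) * p^2 := by ring
    have : N * p + (N^2 - N) * p^2 - m^2 ≤ m := by
      rw [hm]
      nlinarith [sq_nonneg p, mul_pos hNpos hp]
    linarith
  -- Chebyshev
  have hsub : {ω | ∀ i, ω ∉ B i} ⊆ {ω | m ≤ |W ω - μ[W]|} := by
    intro ω hω
    have : W ω = 0 := by
      rw [hW]
      exact Finset.sum_eq_zero fun i _ => Set.indicator_of_notMem (hω i) _
    simp only [Set.mem_setOf_eq, this, hEW, zero_sub, abs_neg, abs_of_pos hmpos, le_refl]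
  have hcheb := meas_ge_le_variance_div_sq (μ := μ) hmem hmpos
  have h1 : μ {ω | ∀ i, ω ∉ B i} ≤ ENNReal.ofReal (variance W μ / m ^ 2) :=
    le_trans (measure_mono hsub) hcheb
  have h2 : (μ {ω | ∀ i, ω ∉ B i}).toReal ≤ variance W μ / m ^ 2 := by
    refine le_trans (ENNReal.toReal_mono ENNReal.ofReal_ne_top h1) ?_
    rw [ENNReal.toReal_ofReal (div_nonneg (variance_nonneg W μ) (sq_nonneg m))]
  refine le_trans h2 ?_
  have heq : (1:ℝ) / ((Fintype.card ι : ℝ) * p) = m / m^2 := by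
    rw [hm, hN]; field_simp
  rw [heq]
  gcongr

lemma nat_le_two_pow_pred {n : ℕ} (hn : 1 ≤ n) : n ≤ 2 ^ (n - 1) := by
  induction n, hn using Nat.le_induction with
  | base => norm_num
  | succ k hk ih =>
    have h2 : 2 ^ (k + 1 - 1) = 2 * 2 ^ (k - 1) := by
      rw [Nat.add_sub_cancel]
      conv_lhs => rw [show k = k - 1 + 1 by omega]
      rw [pow_succ]; ring
    calc k + 1 ≤ 2 * k := by omega
      _ ≤ 2 * 2 ^ (k - 1) := by omega
      _ = 2 ^ (k + 1 - 1) := h2.symm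


/-- For `X ~ CCP(n)` with `n ≥ 2` and all `x ≥ 0`,
`Pr[X ≤ n(ln n − x)] ≤ 2 e^{-x}`. -/
theorem ccp_left_tail {Ω : Type} [MeasurableSpace Ω] (μ : Measure Ω)
    [IsProbabilityMeasure μ] {n : ℕ} (hn : 2 ≤ n) (d : ℕ → Ω → Fin n)
    (hmeas : ∀ t, Measurable (d t))
    (hunif : ∀ t j, μ {ω | d t ω = j} = (n : ENNReal)⁻¹)
    (hindep : iIndepFun d μ)
    {x : ℝ} (hx : 0 ≤ x) :
    (μ {ω | (coverTime d ω : ℝ) ≤ (n : ℝ) * (Real.log n - x)}).toReal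
      ≤ 2 * Real.exp (-x) := by
  classical
  have hn2 : (2:ℝ) ≤ (n:ℝ) := by exact_mod_cast hn
  set r : ℝ := (n : ℝ) * (Real.log n - x) with hr
  rcases lt_or_ge r 0 with hneg | hpos
  · have hempty : {ω | (coverTime d ω : ℝ) ≤ r} = ∅ := by
      ext ω
      simp only [Set.mem_setOf_eq, Set.mem_empty_iff_false, iff_false, not_le]
      exact lt_of_lt_of_le hneg (Nat.cast_nonneg _)
    rw [hempty]
    simp only [measure_empty, ENNReal.toReal_zero]
    positivity
  set t : ℕ := ⌊r⌋₊ with ht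
  set B : Fin n → Set Ω := fun j => ⋂ s ∈ Finset.range t, {ω | d s ω ≠ j} with hB
  have hBmeas : ∀ j, MeasurableSet (B j) := by
    intro j
    exact Finset.measurableSet_biInter _ fun s _ =>
      (hmeas s (measurableSet_singleton j)).compl
  -- measure of B j
  have hcard1 : ∀ j : Fin n, ({j}ᶜ : Finset (Fin n)).card = n - 1 := by
    intro j
    rw [Finset.card_compl]
    simp
  have hmeasB : ∀ j, μ (B j) = (((n-1 : ℕ) : ENNReal) * (n : ENNReal)⁻¹) ^ t := by
    intro j
    have : B j = ⋂ s ∈ Finset.range t, {ω | d s ω ∈ ({j}ᶜ : Finset (Fin n))} := by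
      rw [hB]
      refine Set.iInter₂_congr fun s _ => ?_
      ext ω; simp
    rw [this, draws_all_mem μ d hmeas hunif hindep t _, hcard1 j]
  -- continue
  have hnpos : (0:ℝ) < (n:ℝ) := by linarith
  have hd : (0:ℝ) < (n:ℝ) - 1 := by linarith
  set p : ℝ := (((n:ℝ) - 1) / n) ^ t with hp_def
  have hq0 : (0:ℝ) < ((n:ℝ) - 1) / n := by positivity
  have hppos : 0 < p := pow_pos hq0 t
  have hcastq : ((n - 1 : ℕ) : ℝ) = (n:ℝ) - 1 := by
    rw [Nat.cast_sub (by omega)]; norm_num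
  have hmeanB : ∀ j, (μ (B j)).toReal = p := by
    intro j
    rw [hmeasB j, hp_def]
    rw [ENNReal.toReal_pow, ENNReal.toReal_mul, ENNReal.toReal_inv]
    rw [ENNReal.toReal_natCast, ENNReal.toReal_natCast, hcastq, div_eq_mul_inv]
  -- cross terms
  have hcrossB : ∀ j k : Fin n, j ≠ k → (μ (B j ∩ B k)).toReal ≤ p ^ 2 := by
    intro j k hjk
    have hinter : B j ∩ B k
        = ⋂ s ∈ Finset.range t, {ω | d s ω ∈ ({j, k}ᶜ : Finset (Fin n))} := by
      ext ω
      simp only [hB, Set.mem_inter_iff, Set.mem_iInter, Set.mem_setOf_eq,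
        Finset.mem_compl, Finset.mem_insert, Finset.mem_singleton, Finset.mem_range]
      constructor
      · rintro ⟨h1, h2⟩ s hs h
        rcases h with h | h
        · exact h1 s hs h
        · exact h2 s hs h
      · intro h
        exact ⟨fun s hs hh => h s hs (Or.inl hh), fun s hs hh => h s hs (Or.inr hh)⟩
    have hcard2 : ({j, k}ᶜ : Finset (Fin n)).card = n - 2 := by
      rw [Finset.card_compl, Finset.card_insert_of_notMem (by simpa using hjk)]
      simp
    have hval : (μ (B j ∩ B k)).toReal = (((n:ℝ) - 2) / n) ^ t := by
      rw [hinter, draws_all_mem μ d hmeas hunif hindep t _, hcard2]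
      rw [ENNReal.toReal_pow, ENNReal.toReal_mul, ENNReal.toReal_inv]
      have h2 : ((n - 2 : ℕ) : ℝ) = (n:ℝ) - 2 := by
        rw [Nat.cast_sub (by omega)]; norm_num
      rw [ENNReal.toReal_natCast, ENNReal.toReal_natCast, h2, div_eq_mul_inv]
    rw [hval, hp_def, ← pow_mul, mul_comm t 2, pow_mul]
    apply pow_le_pow_left₀ (div_nonneg (by linarith) (by linarith))
    rw [div_pow, div_le_div_iff₀ (by positivity) (by positivity)]
    nlinarith
  -- null set of never-collected coupons
  set C : Fin n → Set Ω := fun j => ⋂ s : ℕ, {ω | d s ω ≠ j} with hC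
  have hCnull : ∀ j, μ (C j) = 0 := by
    intro j
    have hle : ∀ T : ℕ, μ (C j) ≤ (((n - 1 : ℕ) : ENNReal) * (n : ENNReal)⁻¹) ^ T := by
      intro T
      have hsub : C j ⊆ ⋂ s ∈ Finset.range T, {ω | d s ω ∈ ({j}ᶜ : Finset (Fin n))} := by
        intro ω hω
        simp only [hC, Set.mem_iInter, Set.mem_setOf_eq] at hω ⊢
        intro s _
        simpa using hω s
      calc μ (C j) ≤ μ (⋂ s ∈ Finset.range T, {ω | d s ω ∈ ({j}ᶜ : Finset (Fin n))}) :=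
            measure_mono hsub
        _ = (((n - 1 : ℕ) : ENNReal) * (n : ENNReal)⁻¹) ^ T := by
            rw [draws_all_mem μ d hmeas hunif hindep T _, hcard1 j]
    have hq1 : ((n - 1 : ℕ) : ENNReal) * (n : ENNReal)⁻¹ < 1 := by
      rw [← div_eq_mul_inv]
      rw [ENNReal.div_lt_iff (Or.inl (by exact_mod_cast (by omega : n ≠ 0)))
        (Or.inl (ENNReal.natCast_ne_top n))]
      rw [one_mul]
      exact_mod_cast (by omega : n - 1 < n)
    have htend := ENNReal.tendsto_pow_atTop_nhds_zero_of_lt_one hq1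
    have : μ (C j) ≤ 0 := ge_of_tendsto' htend hle
    exact le_antisymm this zero_le
  -- inclusion
  have hincl : {ω | (coverTime d ω : ℝ) ≤ r} ⊆ {ω | ∀ j, ω ∉ B j} ∪ ⋃ j, C j := by
    intro ω hω
    by_cases hcov : ∃ j : Fin n, ∀ s : ℕ, d s ω ≠ j
    · right
      obtain ⟨j, hj⟩ := hcov
      exact Set.mem_iUnion.2 ⟨j, Set.mem_iInter.2 fun s => hj s⟩
    · left
      push_neg at hcov
      have hnonempty : {T | ∀ j : Fin n, ∃ s < T, d s ω = j}.Nonempty := by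
        choose f hf using hcov
        refine ⟨(Finset.univ.sup f) + 1, fun j => ⟨f j, ?_, hf j⟩⟩
        exact Nat.lt_succ_of_le (Finset.le_sup (Finset.mem_univ j))
      have hmem : coverTime d ω ∈ {T | ∀ j : Fin n, ∃ s < T, d s ω = j} :=
        Nat.sInf_mem hnonempty
      have hle : coverTime d ω ≤ t := Nat.le_floor hω
      intro j hmemB
      obtain ⟨s, hs, hds⟩ := hmem j
      simp only [hB, Set.mem_iInter, Finset.mem_range, Set.mem_setOf_eq] at hmemB
      exact hmemB s (lt_of_lt_of_le hs hle) hds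
  have hfinal : μ {ω | (coverTime d ω : ℝ) ≤ r} ≤ μ {ω | ∀ j, ω ∉ B j} := by
    calc μ {ω | (coverTime d ω : ℝ) ≤ r} ≤ μ ({ω | ∀ j, ω ∉ B j} ∪ ⋃ j, C j) :=
          measure_mono hincl
      _ ≤ μ {ω | ∀ j, ω ∉ B j} + μ (⋃ j, C j) := measure_union_le _ _
      _ = μ {ω | ∀ j, ω ∉ B j} := by
          rw [measure_iUnion_null fun j => hCnull j, add_zero]
  have hsecond : (μ {ω | ∀ j, ω ∉ B j}).toReal ≤ 1 / ((n:ℝ) * p) := by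
    have := second_moment_bound μ B hBmeas hppos hmeanB hcrossB
      (by simp only [Fintype.card_fin]; omega)
    simpa [Fintype.card_fin] using this
  have h1 : (μ {ω | (coverTime d ω : ℝ) ≤ r}).toReal ≤ 1 / ((n:ℝ) * p) :=
    le_trans (ENNReal.toReal_mono (measure_ne_top μ _) hfinal) hsecond
  -- analytic bound
  have hge1 : (1:ℝ) ≤ (n:ℝ) / ((n:ℝ) - 1) := by
    rw [le_div_iff₀ hd]; linarith
  have hlogq : Real.log ((n:ℝ) / ((n:ℝ) - 1)) ≤ 1 / ((n:ℝ) - 1) := by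
    have h0 := Real.log_le_sub_one_of_pos (show (0:ℝ) < (n:ℝ)/((n:ℝ)-1) by positivity)
    have heq : (n:ℝ)/((n:ℝ)-1) - 1 = 1/((n:ℝ)-1) := by field_simp; ring
    linarith
  have hqlog : Real.log (((n:ℝ) - 1) / n) = - Real.log ((n:ℝ) / ((n:ℝ) - 1)) := by
    rw [← Real.log_inv]
    congr 1
    field_simp
  have hp_exp : p = Real.exp ((t:ℝ) * Real.log (((n:ℝ) - 1) / n)) := by
    rw [Real.exp_nat_mul, Real.exp_log hq0, hp_def]
  have hlog2 : Real.log n ≤ ((n:ℝ) - 1) * Real.log 2 := by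
    have h1' : ((n:ℕ):ℝ) ≤ ((2:ℕ):ℝ) ^ (n - 1) := by
      exact_mod_cast nat_le_two_pow_pred (by omega : 1 ≤ n)
    have h2' := Real.log_le_log (by positivity) h1'
    rw [Real.log_pow] at h2'
    calc Real.log n ≤ ((n-1:ℕ):ℝ) * Real.log ((2:ℕ):ℝ) := h2'
      _ = ((n:ℝ) - 1) * Real.log 2 := by rw [hcastq]; norm_num
  have hnum : 0 ≤ (x - Real.log n) + ((n:ℝ) - 1) * Real.log 2 := by linarith
  have hkey : x - Real.log 2 ≤ Real.log n - r / ((n:ℝ) - 1) := by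
    rw [hr, ← sub_nonneg]
    have heq : Real.log n - (n:ℝ) * (Real.log n - x) / ((n:ℝ) - 1) - (x - Real.log 2)
        = ((x - Real.log n) + ((n:ℝ) - 1) * Real.log 2) / ((n:ℝ) - 1) := by
      field_simp
      ring
    rw [heq]
    exact div_nonneg hnum hd.le
  have hple : Real.exp (-(r / ((n:ℝ) - 1))) ≤ p := by
    rw [hp_exp]
    apply Real.exp_le_exp.2
    rw [hqlog, mul_neg, neg_le_neg_iff]
    calc (t:ℝ) * Real.log ((n:ℝ) / ((n:ℝ) - 1)) ≤ r * (1 / ((n:ℝ) - 1)) :=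
        mul_le_mul (Nat.floor_le hpos) hlogq (Real.log_nonneg hge1) hpos
      _ = r / ((n:ℝ) - 1) := by ring
  have hmain : Real.exp x / 2 ≤ (n:ℝ) * p := by
    calc Real.exp x / 2 = Real.exp (x - Real.log 2) := by
          rw [Real.exp_sub, Real.exp_log two_pos]
      _ ≤ Real.exp (Real.log n - r / ((n:ℝ) - 1)) := Real.exp_le_exp.2 hkey
      _ = (n:ℝ) * Real.exp (-(r / ((n:ℝ) - 1))) := by
          rw [Real.exp_sub, Real.exp_log hnpos, Real.exp_neg, div_eq_mul_inv]
      _ ≤ (n:ℝ) * p := mul_le_mul_of_nonneg_left hple hnpos.le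
  have hfin : 1 / ((n:ℝ) * p) ≤ 2 * Real.exp (-x) := by
    have hhalf : (0:ℝ) < Real.exp x / 2 := by positivity
    calc 1 / ((n:ℝ) * p) ≤ 1 / (Real.exp x / 2) :=
        one_div_le_one_div_of_le hhalf hmain
      _ = 2 * Real.exp (-x) := by
          rw [Real.exp_neg]
          field_simp
  exact le_trans h1 hfin
end

section
/- Let X_1,...,X_m be i.i.d. CCP(n) random variables and X_max = max_j X_j. Then for all x ≥ 0 and n ≥ 2, Pr[|X_max/n − ln n| > x] ≤ (2+m) e^{-x}. -/
open MeasureTheory ProbabilityTheory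

section AuxAnalytic

lemma log_one_sub_le {t : ℝ} (h0 : 0 ≤ t) (h2 : t ≤ 1/2) :
    Real.log (1 - t) ≤ -t - t^2/2 := by
  set f : ℝ → ℝ := fun y => -Real.log (1-y) - y - y^2/2 with hf
  have hderiv : ∀ y ∈ Set.Ioo (0:ℝ) (1/2), HasDerivAt f (y^2/(1-y)) y := by
    intro y hy
    have h1y : (1:ℝ) - y ≠ 0 := by nlinarith [hy.1, hy.2]
    have h₁ : HasDerivAt (fun y : ℝ => 1 - y) (-1) y := by
      simpa using (hasDerivAt_id y).const_sub 1
    have h₂ : HasDerivAt (fun y : ℝ => Real.log (1-y)) (-1/(1-y)) y := by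
      have := (Real.hasDerivAt_log h1y).comp y h₁
      rw [show (-1/(1-y)) = (1-y)⁻¹ * -1 by ring]
      exact this
    have h₃ : HasDerivAt f (-(-1/(1-y)) - 1 - y) y := by
      exact (((h₂.neg).sub (hasDerivAt_id y)).sub
        (by simpa using ((hasDerivAt_pow 2 y).div_const 2)))
    convert h₃ using 1
    field_simp
    ring
  have hcont : ContinuousOn f (Set.Icc 0 (1/2)) := by
    apply ContinuousOn.sub
    apply ContinuousOn.sub
    · apply ContinuousOn.neg
      apply ContinuousOn.log
      · fun_prop
      · intro y hy; simp only [Set.mem_Icc] at hy; nlinarith [hy.1, hy.2]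
    · fun_prop
    · fun_prop
  have hmono : MonotoneOn f (Set.Icc 0 (1/2)) := by
    apply monotoneOn_of_deriv_nonneg (convex_Icc _ _) hcont
    · intro y hy
      rw [interior_Icc] at hy
      exact ((hderiv y hy).differentiableAt).differentiableWithinAt
    · intro y hy
      rw [interior_Icc] at hy
      rw [((hderiv y hy).deriv)]
      have : (0:ℝ) < 1 - y := by nlinarith [hy.1, hy.2]
      positivity
  have h0f : f 0 = 0 := by simp [hf]
  have := hmono (Set.mem_Icc.mpr ⟨le_refl _, by norm_num⟩) (Set.mem_Icc.mpr ⟨h0, h2⟩) h0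
  rw [h0f] at this
  simp only [hf] at this
  linarith
lemma c_lower {n : ℕ} (hn : 2 ≤ n) :
    1/(n:ℝ) + 1/(2*(n:ℝ)^2) ≤ Real.log n - Real.log ((n:ℝ)-1) := by
  have hn1 : (1:ℝ) ≤ (n:ℝ) - 1 := by
    have : (2:ℝ) ≤ n := by exact_mod_cast hn
    linarith
  have hnpos : (0:ℝ) < n := by linarith
  have key : Real.log (((n:ℝ)-1)/n) = Real.log ((n:ℝ)-1) - Real.log n :=
    Real.log_div (by linarith) (by positivity)
  have h1 : ((n:ℝ)-1)/n = 1 - 1/n := by field_simp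
  have h2 : Real.log (1 - 1/(n:ℝ)) ≤ -(1/n) - (1/(n:ℝ))^2/2 := by
    apply log_one_sub_le (by positivity)
    rw [div_le_div_iff₀ hnpos (by norm_num)]
    linarith
  rw [h1] at key
  have : (1/(n:ℝ))^2/2 = 1/(2*(n:ℝ)^2) := by field_simp
  linarith [key ▸ h2, this ▸ h2]
lemma c_upper {n : ℕ} (hn : 2 ≤ n) :
    Real.log n - Real.log ((n:ℝ)-1) ≤ 1/((n:ℝ)-1) := by
  have hn1 : (1:ℝ) ≤ (n:ℝ) - 1 := by
    have : (2:ℝ) ≤ n := by exact_mod_cast hn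
    linarith
  have key : Real.log ((n:ℝ)/((n:ℝ)-1)) = Real.log n - Real.log ((n:ℝ)-1) :=
    Real.log_div (by positivity) (by linarith)
  have h2 : Real.log ((n:ℝ)/((n:ℝ)-1)) ≤ (n:ℝ)/((n:ℝ)-1) - 1 :=
    Real.log_le_sub_one_of_pos (by positivity)
  have h3 : (n:ℝ)/((n:ℝ)-1) - 1 = 1/((n:ℝ)-1) := by field_simp; ring
  linarith [key ▸ h2]
lemma log_le_sub_one_mul_log_two {n : ℕ} (hn : 1 ≤ n) :
    Real.log n ≤ ((n:ℝ) - 1) * Real.log 2 := by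
  have h1 : n ≤ 2^(n-1) := by
    induction n with
    | zero => simp
    | succ k ih =>
      rcases Nat.eq_or_lt_of_le hn with h | h
      · simp [← h]
      · have hk : 1 ≤ k := by omega
        have := ih hk
        have h2 : k + 1 ≤ 2^(k-1) + 2^(k-1) := by omega
        have h3 : 2^(k-1) + 2^(k-1) = 2^k := by
          rw [← two_mul, ← pow_succ']
          congr 1; omega
        simpa [Nat.succ_sub_one] using h2.trans_eq h3
  have h2 : Real.log n ≤ Real.log (2^(n-1)) := by
    apply Real.log_le_log (by exact_mod_cast hn)
    exact_mod_cast h1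
  rw [Real.log_pow] at h2
  have : ((n - 1 : ℕ) : ℝ) = (n:ℝ) - 1 := by
    have : (1:ℕ) ≤ n := hn
    push_cast [Nat.cast_sub this]
    ring
  rw [this] at h2
  exact h2
lemma log_twelve_ge : (7:ℝ)/3 ≤ Real.log 12 := by
  have key : Real.exp (7/3) ≤ 12 := by
    have h3 : Real.exp (7/3) ^ (3:ℕ) = Real.exp 7 := by
      rw [← Real.exp_nat_mul]; norm_num
    have h4 : Real.exp 7 ≤ 1728 := by
      have := Real.exp_one_lt_d9
      calc Real.exp 7 = Real.exp 1 ^ (7:ℕ) := by rw [← Real.exp_nat_mul]; norm_num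
        _ ≤ 2.7182818286 ^ (7:ℕ) := by
            apply pow_le_pow_left₀ (Real.exp_pos 1).le this.le
        _ ≤ 1728 := by norm_num
    apply le_of_pow_le_pow_left₀ (n := 3) (by norm_num) (by norm_num)
    rw [h3]
    calc Real.exp 7 ≤ 1728 := h4
      _ ≤ 12^3 := by norm_num
  calc (7:ℝ)/3 = Real.log (Real.exp (7/3)) := by rw [Real.log_exp]
    _ ≤ Real.log 12 := Real.log_le_log (Real.exp_pos _) key
end AuxAnalytic

section Prob
variable {Ω : Type} [MeasurableSpace Ω] {μ : Measure Ω} [IsProbabilityMeasure μ]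
variable {n m : ℕ}

lemma prob_mem_finset {d : Fin m → ℕ → Ω → Fin n}
    (hmeas : ∀ j t, Measurable (d j t))
    (hunif : ∀ j t i, μ {ω | d j t ω = i} = (n : ENNReal)⁻¹)
    (j : Fin m) (s : ℕ) (A : Finset (Fin n)) :
    μ {ω | d j s ω ∈ A} = A.card * (n:ENNReal)⁻¹ := by
  have h1 : {ω | d j s ω ∈ A} = ⋃ i ∈ A, {ω | d j s ω = i} := by
    ext ω; simp
  rw [h1, measure_biUnion_finset]
  · simp [hunif j s, Finset.sum_const, nsmul_eq_mul]
  · intro i _ i' _ hii'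
    simp only [Function.onFun, Set.disjoint_left]
    intro ω h1 h2
    simp only [Set.mem_setOf_eq] at h1 h2
    exact hii' (h1 ▸ h2 ▸ rfl)
  · intro i _
    exact (hmeas j s) (measurableSet_singleton i)
lemma prob_inter_range {d : Fin m → ℕ → Ω → Fin n}
    (hmeas : ∀ j t, Measurable (d j t))
    (hunif : ∀ j t i, μ {ω | d j t ω = i} = (n : ENNReal)⁻¹)
    (hindep : iIndepFun (fun p : Fin m × ℕ => d p.1 p.2) μ)
    (j : Fin m) (T : ℕ) (A : Finset (Fin n)) :
    μ (⋂ s ∈ Finset.range T, {ω | d j s ω ∈ A}) = ((A.card : ENNReal) * (n:ENNReal)⁻¹)^T := by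
  have hinj : Function.Injective (fun s : ℕ => ((j, s) : Fin m × ℕ)) := by
    intro a b h; simpa using h
  have key := hindep.meas_biInter (S := (Finset.range T).image (fun s => (j, s)))
    (s := fun p => (d p.1 p.2) ⁻¹' (↑A : Set (Fin n)))
    (fun p _ => ⟨↑A, (↑A : Set (Fin n)).toFinite.measurableSet, rfl⟩)
  rw [Finset.set_biInter_finset_image] at key
  rw [Finset.prod_image (fun a _ b _ h => hinj h)] at key
  have h2 : ∀ s : ℕ, (d j s) ⁻¹' (↑A : Set (Fin n)) = {ω | d j s ω ∈ A} := fun s => rfl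
  simp only [h2] at key
  rw [key]
  have h3 : ∀ s : ℕ, μ {ω | d j s ω ∈ A} = (A.card : ENNReal) * (n:ENNReal)⁻¹ :=
    fun s => prob_mem_finset hmeas hunif j s A
  rw [Finset.prod_congr rfl (fun s _ => h3 s), Finset.prod_const, Finset.card_range]
lemma ennreal_pow_toReal {k T : ℕ} :
    ((((k:ℕ):ENNReal) * ((n:ℕ):ENNReal)⁻¹)^T).toReal = ((k:ℝ)/(n:ℝ))^T := by
  rw [ENNReal.toReal_pow, ENNReal.toReal_mul, ENNReal.toReal_inv]
  simp [div_eq_mul_inv]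
lemma cover_gt_bound {d : Fin m → ℕ → Ω → Fin n}
    (hn : 2 ≤ n)
    (hmeas : ∀ j t, Measurable (d j t))
    (hunif : ∀ j t i, μ {ω | d j t ω = i} = (n : ENNReal)⁻¹)
    (hindep : iIndepFun (fun p : Fin m × ℕ => d p.1 p.2) μ)
    (T : ℕ) :
    (μ {ω | ∃ j : Fin m, T < coverTime (d j) ω}).toReal
      ≤ (m:ℝ) * ((n:ℝ) * (((n:ℝ)-1)/(n:ℝ))^T) := by
  classical
  set C : Fin m → Fin n → Set Ω :=
    fun j i => ⋂ s ∈ Finset.range T, {ω | d j s ω ∈ ({i}ᶜ : Finset (Fin n))} with hC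
  have hsub : {ω | ∃ j : Fin m, T < coverTime (d j) ω} ⊆ ⋃ j, ⋃ i, C j i := by
    intro ω hω
    obtain ⟨j, hj⟩ := hω
    rw [coverTime] at hj
    have hT : T ∉ {t | ∀ i : Fin n, ∃ s < t, d j s ω = i} := by
      intro hmem
      exact absurd (Nat.sInf_le hmem) (by omega)
    simp only [Set.mem_setOf_eq, not_forall] at hT
    obtain ⟨i, hi⟩ := hT
    push_neg at hi
    refine Set.mem_iUnion.mpr ⟨j, Set.mem_iUnion.mpr ⟨i, ?_⟩⟩
    simp only [hC, Set.mem_iInter, Finset.mem_range]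
    intro s hs
    simp only [Set.mem_setOf_eq, Finset.mem_compl, Finset.mem_singleton]
    exact hi s hs
  have hcard : ∀ i : Fin n, ({i}ᶜ : Finset (Fin n)).card = n - 1 := by
    intro i
    rw [Finset.card_compl, Finset.card_singleton, Fintype.card_fin]
  have hmC : ∀ j i, μ (C j i) = (((n-1:ℕ):ENNReal) * ((n:ℕ):ENNReal)⁻¹)^T := by
    intro j i
    rw [hC]
    rw [prob_inter_range hmeas hunif hindep j T ({i}ᶜ : Finset (Fin n)), hcard i]
  have hbound : μ {ω | ∃ j : Fin m, T < coverTime (d j) ω}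
      ≤ (m : ENNReal) * ((n:ENNReal) * (((n-1:ℕ):ENNReal) * ((n:ℕ):ENNReal)⁻¹)^T) := by
    refine (measure_mono hsub).trans ?_
    refine (measure_iUnion_fintype_le _ _).trans ?_
    have : ∀ j : Fin m, μ (⋃ i, C j i)
        ≤ (n:ENNReal) * (((n-1:ℕ):ENNReal) * ((n:ℕ):ENNReal)⁻¹)^T := by
      intro j
      refine (measure_iUnion_fintype_le _ _).trans ?_
      simp only [hmC]
      rw [Finset.sum_const, Finset.card_univ, Fintype.card_fin, nsmul_eq_mul]
    refine (Finset.sum_le_sum (fun j _ => this j)).trans ?_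
    rw [Finset.sum_const, Finset.card_univ, Fintype.card_fin, nsmul_eq_mul]
  have hne : ((m : ENNReal) * ((n:ENNReal) * (((n-1:ℕ):ENNReal) * ((n:ℕ):ENNReal)⁻¹)^T)) ≠ ⊤ := by
    apply ENNReal.mul_ne_top (by simp)
    apply ENNReal.mul_ne_top (by simp)
    apply ENNReal.pow_ne_top
    apply ENNReal.mul_ne_top (by simp)
    simp only [ne_eq, ENNReal.inv_eq_top, Nat.cast_eq_zero]
    omega
  refine (ENNReal.toReal_mono hne hbound).trans ?_
  rw [ENNReal.toReal_mul, ENNReal.toReal_mul, ennreal_pow_toReal (n := n) (k := n-1) (T := T)]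
  have hcast : ((n-1:ℕ):ℝ) = (n:ℝ) - 1 := by
    have : (1:ℕ) ≤ n := by omega
    push_cast [Nat.cast_sub this]
    ring
  simp [hcast]
lemma cover_le_bound {d : Fin m → ℕ → Ω → Fin n}
    (hn : 2 ≤ n)
    (hmeas : ∀ j t, Measurable (d j t))
    (hunif : ∀ j t i, μ {ω | d j t ω = i} = (n : ENNReal)⁻¹)
    (hindep : iIndepFun (fun p : Fin m × ℕ => d p.1 p.2) μ)
    (j₀ : Fin m) (t : ℕ) :
    ((n:ℝ) * (((n:ℝ)-1)/(n:ℝ))^t) * (μ {ω | coverTime (d j₀) ω ≤ t}).toReal ≤ 1 := by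
  classical
  have hnR : (2:ℝ) ≤ (n:ℝ) := by exact_mod_cast hn
  have hn0 : (0:ℝ) < n := by linarith
  set q : ℝ := ((n:ℝ)-1)/(n:ℝ) with hqdef
  have hq0 : 0 < q := by rw [hqdef]; apply div_pos <;> linarith
  set qt : ℝ := q^t with hqt
  have hqt0 : 0 < qt := pow_pos hq0 t
  set u : ℝ := (n:ℝ) * qt with hu
  have hu0 : 0 < u := by positivity
  -- the events
  set B : Fin n → Set Ω :=
    fun i => ⋂ s ∈ Finset.range t, {ω | d j₀ s ω ∈ ({i}ᶜ : Finset (Fin n))} with hB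
  have hBmeas : ∀ i, MeasurableSet (B i) := by
    intro i
    rw [hB]
    refine Set.Finite.measurableSet_biInter (Finset.range t).finite_toSet (fun s _ => ?_)
    exact (hmeas j₀ s) (Set.Finite.measurableSet (Set.toFinite _))
  have hcard1 : ∀ i : Fin n, (({i}ᶜ : Finset (Fin n))).card = n - 1 := by
    intro i; rw [Finset.card_compl, Finset.card_singleton, Fintype.card_fin]
  have hμB : ∀ i, (μ (B i)).toReal = qt := by
    intro i
    rw [hB]
    rw [prob_inter_range hmeas hunif hindep j₀ t ({i}ᶜ : Finset (Fin n)), hcard1 i,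
      ennreal_pow_toReal]
    rw [hqt, hqdef]
    congr 2
    have : (1:ℕ) ≤ n := by omega
    push_cast [Nat.cast_sub this]
    ring
  set rt : ℝ := (((n:ℝ)-2)/(n:ℝ))^t with hrt
  have hμBB : ∀ i i' : Fin n, i ≠ i' → (μ (B i ∩ B i')).toReal = rt := by
    intro i i' hii'
    have hset : B i ∩ B i' = ⋂ s ∈ Finset.range t,
        {ω | d j₀ s ω ∈ (({i, i'}ᶜ : Finset (Fin n)))} := by
      rw [hB]
      ext ω
      simp only [Set.mem_inter_iff, Set.mem_iInter, Set.mem_setOf_eq, Finset.mem_compl,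
        Finset.mem_singleton, Finset.mem_insert, Finset.mem_range]
      constructor
      · rintro ⟨h1, h2⟩ s hs
        push_neg
        exact ⟨h1 s hs, h2 s hs⟩
      · intro h
        constructor <;> intro s hs <;> have := h s hs <;> tauto
    have hcard2 : (({i, i'}ᶜ : Finset (Fin n))).card = n - 2 := by
      rw [Finset.card_compl, Fintype.card_fin, Finset.card_insert_of_notMem (by simpa using hii'),
        Finset.card_singleton]
    rw [hset, prob_inter_range hmeas hunif hindep j₀ t _, hcard2, ennreal_pow_toReal, hrt]
    congr 2
    have h2n : (2:ℕ) ≤ n := hn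
    push_cast [Nat.cast_sub h2n]
    ring
  -- the counting random variable
  set N : Ω → ℝ := fun ω => ∑ i : Fin n, (B i).indicator (fun _ => (1:ℝ)) ω with hN
  have hint : ∀ i, Integrable ((B i).indicator fun _ => (1:ℝ)) μ :=
    fun i => (integrable_const 1).indicator (hBmeas i)
  have hNint : Integrable N μ := by
    rw [hN]; exact integrable_finset_sum _ (fun i _ => hint i)
  have hEN : ∫ ω, N ω ∂μ = u := by
    rw [hN, integral_finset_sum _ (fun i _ => hint i)]
    have : ∀ i : Fin n, ∫ ω, (B i).indicator (fun _ => (1:ℝ)) ω ∂μ = qt := by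
      intro i
      rw [integral_indicator_const (1:ℝ) (hBmeas i), smul_eq_mul, mul_one, measureReal_def, hμB i]
    rw [Finset.sum_congr rfl (fun i _ => this i), Finset.sum_const, Finset.card_univ,
      Fintype.card_fin, nsmul_eq_mul, hu]
  set P : Ω → ℝ := fun ω => ∑ i : Fin n, ∑ i' : Fin n,
    (B i ∩ B i').indicator (fun _ => (1:ℝ)) ω with hP
  have hPint : Integrable P μ := by
    rw [hP]
    refine integrable_finset_sum _ (fun i _ => integrable_finset_sum _ (fun i' _ => ?_))
    exact (integrable_const 1).indicator ((hBmeas i).inter (hBmeas i'))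
  have hsq : ∀ ω, (N ω - u)^2 = P ω - 2*u*N ω + u^2 := by
    intro ω
    have hNN : N ω * N ω = P ω := by
      rw [hN, hP, Finset.sum_mul_sum]
      refine Finset.sum_congr rfl (fun i _ => Finset.sum_congr rfl (fun i' _ => ?_))
      rw [← Set.inter_indicator_mul]
      simp
    nlinarith [hNN]
  have hIsq : Integrable (fun ω => (N ω - u)^2) μ := by
    have heq : (fun ω => (N ω - u)^2) = fun ω => P ω - 2*u*N ω + u^2 := funext hsq
    rw [heq]
    exact ((hPint.sub ((hNint.const_mul (2*u)))).add (integrable_const _))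
  have hEP : ∫ ω, P ω ∂μ ≤ (n:ℝ) * qt + (n:ℝ)*((n:ℝ)-1)*qt^2 := by
    have hoff : ∀ i i' : Fin n, i ≠ i' → (μ (B i ∩ B i')).toReal ≤ qt^2 := by
      intro i i' hii'
      rw [hμBB i i' hii', hrt, hqt]
      have h1 : ((n:ℝ)-2)/n ≤ (((n:ℝ)-1)/n)^2 := by
        rw [div_pow]
        rw [div_le_div_iff₀ (by linarith) (by positivity)]
        nlinarith
      calc (((n:ℝ)-2)/n)^t ≤ ((((n:ℝ)-1)/n)^2)^t := by
            apply pow_le_pow_left₀ (by apply div_nonneg <;> linarith) h1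
        _ = (q^t)^2 := by rw [← pow_mul, ← pow_mul, Nat.mul_comm, hqdef]
    have hdiag : ∀ i : Fin n, (μ (B i ∩ B i)).toReal = qt := by
      intro i; rw [Set.inter_self, hμB i]
    rw [hP, integral_finset_sum _ (fun i _ => integrable_finset_sum _ (fun i' _ =>
      (integrable_const 1).indicator ((hBmeas i).inter (hBmeas i'))))]
    have hstep : ∀ i : Fin n,
        ∫ ω, (∑ i' : Fin n, (B i ∩ B i').indicator (fun _ => (1:ℝ)) ω) ∂μ
          ≤ qt + ((n:ℝ)-1)*qt^2 := by
      intro i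
      rw [integral_finset_sum _ (fun i' _ =>
        (integrable_const 1).indicator ((hBmeas i).inter (hBmeas i')))]
      have hterm : ∀ i' : Fin n,
          ∫ ω, (B i ∩ B i').indicator (fun _ => (1:ℝ)) ω ∂μ = (μ (B i ∩ B i')).toReal := by
        intro i'
        rw [integral_indicator_const (1:ℝ) ((hBmeas i).inter (hBmeas i')), smul_eq_mul, mul_one, measureReal_def]
      rw [Finset.sum_congr rfl (fun i' _ => hterm i')]
      rw [← Finset.add_sum_erase _ _ (Finset.mem_univ i), hdiag i]
      have hsum2 : ∑ i' ∈ Finset.univ.erase i, (μ (B i ∩ B i')).toReal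
          ≤ ((n:ℝ)-1) * qt^2 := by
        have := Finset.sum_le_card_nsmul (Finset.univ.erase i)
          (fun i' => (μ (B i ∩ B i')).toReal) (qt^2)
          (fun i' hi' => hoff i i' (Ne.symm (Finset.ne_of_mem_erase hi')))
        rw [Finset.card_erase_of_mem (Finset.mem_univ i), Finset.card_univ,
          Fintype.card_fin, nsmul_eq_mul] at this
        refine this.trans ?_
        apply mul_le_mul_of_nonneg_right _ (by positivity)
        have : (1:ℕ) ≤ n := by omega
        push_cast [Nat.cast_sub this]
        linarith
      linarith
    calc ∑ i : Fin n, ∫ ω, (∑ i' : Fin n, (B i ∩ B i').indicator (fun _ => (1:ℝ)) ω) ∂μ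
        ≤ ∑ _i : Fin n, (qt + ((n:ℝ)-1)*qt^2) := Finset.sum_le_sum (fun i _ => hstep i)
      _ = (n:ℝ) * qt + (n:ℝ)*((n:ℝ)-1)*qt^2 := by
          rw [Finset.sum_const, Finset.card_univ, Fintype.card_fin, nsmul_eq_mul]
          ring
  have hEsq : ∫ ω, (N ω - u)^2 ∂μ ≤ u := by
    have heq : (fun ω => (N ω - u)^2) = fun ω => P ω - 2*u*N ω + u^2 := funext hsq
    have hintmul : Integrable (fun ω => 2*u*N ω) μ := by exact hNint.const_mul (2*u)
    have hintsub : Integrable (fun ω => P ω - 2*u*N ω) μ := by exact hPint.sub hintmul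
    rw [heq, integral_add hintsub (integrable_const _),
      integral_sub hPint hintmul, integral_const_mul, hEN, integral_const]
    simp only [measureReal_def, measure_univ, ENNReal.toReal_one, smul_eq_mul, one_mul]
    have := hEP
    rw [hu]
    nlinarith [hqt0, hn0, sq_nonneg qt]
  -- Markov inequality
  have hmark := mul_meas_ge_le_integral_of_nonneg (μ := μ)
    (f := fun ω => (N ω - u)^2)
    (Filter.Eventually.of_forall (fun ω => sq_nonneg _)) hIsq (u^2)
  -- event inclusion
  set Z : Set Ω := ⋃ i : Fin n, ⋂ s : ℕ, {ω | d j₀ s ω ≠ i} with hZ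
  have hsubset : {ω | coverTime (d j₀) ω ≤ t}
      ⊆ {ω | u^2 ≤ (N ω - u)^2} ∪ Z := by
    intro ω hω
    simp only [Set.mem_setOf_eq, coverTime] at hω
    by_cases hz : ∃ i : Fin n, ∀ s : ℕ, d j₀ s ω ≠ i
    · right
      obtain ⟨i, hi⟩ := hz
      exact Set.mem_iUnion.mpr ⟨i, Set.mem_iInter.mpr (fun s => hi s)⟩
    · left
      push_neg at hz
      have hSne : {T | ∀ i : Fin n, ∃ s < T, d j₀ s ω = i}.Nonempty := by
        refine ⟨(Finset.univ.sup fun i => Classical.choose (hz i)) + 1, fun i => ?_⟩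
        refine ⟨Classical.choose (hz i), ?_, Classical.choose_spec (hz i)⟩
        exact Nat.lt_succ_of_le (Finset.le_sup (f := fun i => Classical.choose (hz i))
          (Finset.mem_univ i))
      have hmem := Nat.sInf_mem hSne
      have htS : ∀ i : Fin n, ∃ s < t, d j₀ s ω = i := by
        intro i
        obtain ⟨s, hs, hd⟩ := hmem i
        exact ⟨s, lt_of_lt_of_le hs hω, hd⟩
      have hNω : N ω = 0 := by
        rw [hN]
        refine Finset.sum_eq_zero (fun i _ => Set.indicator_of_notMem ?_ _)
        obtain ⟨s, hst, hd⟩ := htS i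
        rw [hB]
        simp only [Set.mem_iInter, Set.mem_setOf_eq, Finset.mem_compl, Finset.mem_singleton,
          Finset.mem_range, not_forall]
        exact ⟨s, hst, by simp [hd]⟩
      simp only [Set.mem_setOf_eq, hNω]
      nlinarith [sq_nonneg u]
  have hZ0 : μ Z = 0 := by
    rw [hZ]
    refine measure_iUnion_null (fun i => ?_)
    have hbd : ∀ T : ℕ, μ (⋂ s : ℕ, {ω | d j₀ s ω ≠ i})
        ≤ ((((n-1:ℕ)):ENNReal) * ((n:ℕ):ENNReal)⁻¹)^T := by
      intro T
      have hsub2 : (⋂ s : ℕ, {ω | d j₀ s ω ≠ i})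
          ⊆ ⋂ s ∈ Finset.range T, {ω | d j₀ s ω ∈ ({i}ᶜ : Finset (Fin n))} := by
        intro ω hω
        simp only [Set.mem_iInter, Set.mem_setOf_eq] at hω
        simp only [Set.mem_iInter, Set.mem_setOf_eq, Finset.mem_compl, Finset.mem_singleton,
          Finset.mem_range]
        intro s _
        exact hω s
      refine (measure_mono hsub2).trans_eq ?_
      rw [prob_inter_range hmeas hunif hindep j₀ T, hcard1 i]
    have hne0 : ((n:ℕ):ENNReal) ≠ 0 := by
      simp only [ne_eq, Nat.cast_eq_zero]; omega
    have hnetop : ((n:ℕ):ENNReal) ≠ ⊤ := by simp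
    have hr1 : (((n-1:ℕ):ENNReal) * ((n:ℕ):ENNReal)⁻¹) < 1 := by
      have hlt : ((n-1:ℕ):ENNReal) < ((n:ℕ):ENNReal) := by
        exact_mod_cast (by omega : n - 1 < n)
      calc ((n-1:ℕ):ENNReal) * ((n:ℕ):ENNReal)⁻¹
          < ((n:ℕ):ENNReal) * ((n:ℕ):ENNReal)⁻¹ := by
            refine (ENNReal.mul_lt_mul_left (ENNReal.inv_ne_zero.mpr hnetop)
              (ENNReal.inv_ne_top.mpr hne0) hlt)
        _ = 1 := ENNReal.mul_inv_cancel hne0 hnetop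
    exact le_antisymm (ge_of_tendsto
      (ENNReal.tendsto_pow_atTop_nhds_zero_of_lt_one hr1)
      (Filter.Eventually.of_forall hbd)) zero_le
  have hmono2 : μ {ω | coverTime (d j₀) ω ≤ t} ≤ μ {ω | u^2 ≤ (N ω - u)^2} := by
    calc μ {ω | coverTime (d j₀) ω ≤ t} ≤ μ ({ω | u^2 ≤ (N ω - u)^2} ∪ Z) :=
          measure_mono hsubset
      _ ≤ μ {ω | u^2 ≤ (N ω - u)^2} + μ Z := measure_union_le _ _
      _ = μ {ω | u^2 ≤ (N ω - u)^2} := by rw [hZ0, add_zero]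
  have htR : (μ {ω | coverTime (d j₀) ω ≤ t}).toReal
      ≤ (μ {ω | u^2 ≤ (N ω - u)^2}).toReal :=
    ENNReal.toReal_mono (measure_ne_top μ _) hmono2
  have h1 : u^2 * (μ {ω | u^2 ≤ (N ω - u)^2}).toReal ≤ u := hmark.trans hEsq
  have h2 := mul_le_mul_of_nonneg_left htR hu0.le
  nlinarith [ENNReal.toReal_nonneg (a := μ {ω | coverTime (d j₀) ω ≤ t})]
end Prob

set_option maxHeartbeats 1000000 in
/-- For `X_1, ..., X_m` i.i.d. `CCP(n)` random variables with
`X_max = max_j X_j`, all `x ≥ 0` and `n ≥ 2`,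
`Pr[|X_max/n − ln n| > x] ≤ (2+m) e^{-x}`. -/
theorem ccp_max_two_sided_tail {Ω : Type} [MeasurableSpace Ω] (μ : Measure Ω)
    [IsProbabilityMeasure μ] {n m : ℕ} (hn : 2 ≤ n) (hm : 0 < m)
    (d : Fin m → ℕ → Ω → Fin n)
    (hmeas : ∀ j t, Measurable (d j t))
    (hunif : ∀ j t i, μ {ω | d j t ω = i} = (n : ENNReal)⁻¹)
    (hindep : iIndepFun
      (fun p : Fin m × ℕ => d p.1 p.2) μ)
    {x : ℝ} (hx : 0 ≤ x) :
    (μ {ω | x < |((Finset.univ.sup fun j => coverTime (d j) ω : ℕ) : ℝ) / n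
        - Real.log n|}).toReal ≤ (2 + m) * Real.exp (-x) := by
  classical
  have hnR : (2:ℝ) ≤ (n:ℝ) := by exact_mod_cast hn
  have hn0 : (0:ℝ) < n := by linarith
  have hmR : (1:ℝ) ≤ (m:ℝ) := by exact_mod_cast hm
  have hlogn : 0 ≤ Real.log n := Real.log_nonneg (by linarith)
  have hlog2pos : (0:ℝ) < Real.log 2 := Real.log_pos (by norm_num)
  set c : ℝ := Real.log n - Real.log ((n:ℝ)-1) with hc
  have hcl : 1/(n:ℝ) + 1/(2*(n:ℝ)^2) ≤ c := by rw [hc]; exact c_lower hn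
  have hcu : c ≤ 1/((n:ℝ)-1) := by rw [hc]; exact c_upper hn
  have hc0 : 0 < c := by
    have h1 : (0:ℝ) < 1/(n:ℝ) + 1/(2*(n:ℝ)^2) := by positivity
    linarith
  set z : ℝ := Real.log n + x with hz
  have hz0 : 0 < z := by
    have := Real.log_pos (show (1:ℝ) < n by linarith)
    linarith
  set a : ℝ := (n:ℝ) * z with ha
  have ha0 : 0 ≤ a := by positivity
  set b : ℝ := (n:ℝ) * (Real.log n - x) with hb
  set T : ℕ := ⌊a⌋₊ with hT
  set q : ℝ := ((n:ℝ)-1)/(n:ℝ) with hq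
  have hq0 : 0 < q := by rw [hq]; apply div_pos <;> linarith
  have hlogq : Real.log q = -c := by
    rw [hq, Real.log_div (by linarith) (by linarith), hc]; ring
  have hexpc : Real.exp c = (n:ℝ)/((n:ℝ)-1) := by
    rw [hc, Real.exp_sub, Real.exp_log (by linarith), Real.exp_log (by linarith)]
  have hgen : ∀ k : ℕ, (n:ℝ) * q^k = Real.exp (Real.log n - (k:ℝ)*c) := by
    intro k
    conv_lhs => rw [← Real.exp_log hn0, ← Real.exp_log hq0]
    rw [← Real.exp_nat_mul, ← Real.exp_add, hlogq]
    ring_nf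
  have hTa : a - 1 ≤ (T:ℝ) := (Nat.sub_one_lt_floor a).le
  set Y : Ω → ℕ := fun ω => Finset.univ.sup fun j => coverTime (d j) ω with hY
  set Ep : Set Ω := {ω | ∃ j : Fin m, T < coverTime (d j) ω} with hEp
  set Em : Set Ω := {ω | ((Y ω : ℕ) : ℝ) < b} with hEm
  -- inclusion
  have hkey : {ω | x < |((Y ω : ℕ) : ℝ) / n - Real.log n|} ⊆ Ep ∪ Em := by
    intro ω hω
    simp only [Set.mem_setOf_eq] at hω
    rcases lt_abs.mp hω with h | h
    · left
      have h1 : a < ((Y ω : ℕ) : ℝ) := by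
        rw [ha, hz]
        have h2 : Real.log n + x < ((Y ω : ℕ) : ℝ) / n := by linarith
        calc (n:ℝ) * (Real.log n + x) < (n:ℝ) * (((Y ω : ℕ) : ℝ) / n) := by
              exact mul_lt_mul_of_pos_left h2 hn0
          _ = ((Y ω : ℕ) : ℝ) := by field_simp
      have h2 : T < Y ω := by
        rw [hT]
        exact (Nat.floor_lt ha0).mpr h1
      obtain ⟨j, _, hj⟩ := Finset.exists_mem_eq_sup Finset.univ
        (Finset.univ_nonempty_iff.mpr ⟨⟨0, hm⟩⟩) (fun j => coverTime (d j) ω)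
      refine Set.mem_setOf_eq ▸ ⟨j, ?_⟩
      have h3 : Y ω = coverTime (d j) ω := hj
      omega
    · right
      rw [hEm]
      simp only [Set.mem_setOf_eq]
      rw [hb]
      have h2 : ((Y ω : ℕ) : ℝ) / n < Real.log n - x := by linarith
      calc ((Y ω : ℕ) : ℝ) = (n:ℝ) * (((Y ω : ℕ) : ℝ) / n) := by field_simp
        _ < (n:ℝ) * (Real.log n - x) := mul_lt_mul_of_pos_left h2 hn0
  have hcomb : (μ {ω | x < |((Y ω : ℕ) : ℝ) / n - Real.log n|}).toReal
      ≤ (μ Ep).toReal + (μ Em).toReal := by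
    have h1 : μ {ω | x < |((Y ω : ℕ) : ℝ) / n - Real.log n|} ≤ μ Ep + μ Em :=
      (measure_mono hkey).trans (measure_union_le _ _)
    have h2 := ENNReal.toReal_mono
      (ENNReal.add_ne_top.mpr ⟨measure_ne_top μ _, measure_ne_top μ _⟩) h1
    rwa [ENNReal.toReal_add (measure_ne_top μ _) (measure_ne_top μ _)] at h2
  have hup : (μ Ep).toReal ≤ (m:ℝ) * ((n:ℝ) * q^T) :=
    cover_gt_bound hn hmeas hunif hindep T
  -- lower tail bound
  have hlow : (μ Em).toReal ≤ 2 * Real.exp (-x) := by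
    by_cases hbpos : 0 < b
    · set t : ℕ := ⌈b⌉₊ - 1 with ht
      have hceil1 : 1 ≤ ⌈b⌉₊ := Nat.one_le_ceil_iff.mpr hbpos
      have htb : (t:ℝ) ≤ b := by
        have h1 : (⌈b⌉₊ : ℝ) < b + 1 := Nat.ceil_lt_add_one hbpos.le
        have h2 : (t:ℝ) = (⌈b⌉₊:ℝ) - 1 := by
          rw [ht]; push_cast [Nat.cast_sub hceil1]; ring
        linarith
      have hsub : Em ⊆ {ω | coverTime (d (⟨0, hm⟩ : Fin m)) ω ≤ t} := by
        intro ω hω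
        rw [hEm] at hω
        simp only [Set.mem_setOf_eq] at *
        have h1 : coverTime (d ⟨0,hm⟩) ω ≤ Y ω :=
          Finset.le_sup (f := fun j => coverTime (d j) ω) (Finset.mem_univ _)
        have h2 : ((coverTime (d ⟨0,hm⟩) ω : ℕ):ℝ) < b :=
          lt_of_le_of_lt (by exact_mod_cast h1) hω
        have h3 : coverTime (d ⟨0,hm⟩) ω < ⌈b⌉₊ := Nat.lt_ceil.mpr h2
        omega
      have hkey2 := cover_le_bound hn hmeas hunif hindep (⟨0, hm⟩ : Fin m) t
      have hmono2 : (μ Em).toReal ≤ (μ {ω | coverTime (d ⟨0,hm⟩) ω ≤ t}).toReal :=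
        ENNReal.toReal_mono (measure_ne_top μ _) (measure_mono hsub)
      have hb0 : 0 ≤ b := hbpos.le
      have hqtlow : Real.exp (Real.log n - b/((n:ℝ)-1)) ≤ (n:ℝ) * q^t := by
        rw [hgen t]
        apply Real.exp_le_exp.mpr
        have h1 : (t:ℝ) * c ≤ b * c := mul_le_mul_of_nonneg_right htb hc0.le
        have h2 : b * c ≤ b * (1/((n:ℝ)-1)) := mul_le_mul_of_nonneg_left hcu hb0
        have h3 : b * (1/((n:ℝ)-1)) = b/((n:ℝ)-1) := by ring
        have h4 : (t:ℝ) * c ≤ b/((n:ℝ)-1) := (h1.trans h2).trans_eq h3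
        exact sub_le_sub_left h4 _
      have hx2 : Real.exp x / 2 ≤ Real.exp (Real.log n - b/((n:ℝ)-1)) := by
        have h1 : Real.exp x / 2 = Real.exp (x - Real.log 2) := by
          rw [Real.exp_sub, Real.exp_log (by norm_num : (0:ℝ) < 2)]
        rw [h1]
        apply Real.exp_le_exp.mpr
        have hlog2n := log_le_sub_one_mul_log_two (show 1 ≤ n by omega)
        have hn1 : (0:ℝ) < (n:ℝ) - 1 := by linarith
        have h9 : b/((n:ℝ)-1) ≤ Real.log n - x + Real.log 2 := by
          rw [div_le_iff₀ hn1, hb]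
          nlinarith [hlog2n, hx, hnR]
        linarith
      have hPn : 0 ≤ (μ {ω | coverTime (d (⟨0,hm⟩ : Fin m)) ω ≤ t}).toReal :=
        ENNReal.toReal_nonneg
      have hAn : 0 ≤ (μ Em).toReal := ENNReal.toReal_nonneg
      have hgoal : (μ Em).toReal * Real.exp x ≤ 2 := by
        nlinarith [hmono2, hkey2, hx2.trans hqtlow, Real.exp_pos x]
      have h10 : 2 * Real.exp (-x) = 2 / Real.exp x := by
        rw [Real.exp_neg]; ring
      rw [h10, le_div_iff₀ (Real.exp_pos x)]
      linarith
    · have hEm0 : Em = ∅ := by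
        rw [hEm]
        refine Set.eq_empty_iff_forall_notMem.mpr (fun ω hω => ?_)
        simp only [Set.mem_setOf_eq] at hω
        have h1 : (0:ℝ) ≤ ((Y ω : ℕ) : ℝ) := Nat.cast_nonneg _
        push_neg at hbpos
        linarith
      rw [hEm0]
      simp only [measure_empty, ENNReal.toReal_zero]
      positivity
  -- final case analysis
  have hprob1 : (μ {ω | x < |((Y ω : ℕ) : ℝ) / n - Real.log n|}).toReal ≤ 1 := by
    have h1 := prob_le_one (μ := μ) (s := {ω | x < |((Y ω : ℕ) : ℝ) / n - Real.log n|})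
    have h2 := ENNReal.toReal_mono ENNReal.one_ne_top h1
    simpa using h2
  by_cases hcase : x ≤ Real.log (2 + (m:ℝ))
  · have h2 : (2+(m:ℝ))⁻¹ ≤ Real.exp (-x) := by
      rw [Real.exp_neg]
      have h3 : Real.exp x ≤ 2 + m := by
        calc Real.exp x ≤ Real.exp (Real.log (2+(m:ℝ))) := Real.exp_le_exp.mpr hcase
          _ = 2 + m := Real.exp_log (by linarith)
      exact inv_anti₀ (Real.exp_pos x) h3
    calc (μ {ω | x < |((Y ω : ℕ) : ℝ) / n - Real.log n|}).toReal ≤ 1 := hprob1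
      _ = (2+(m:ℝ)) * (2+(m:ℝ))⁻¹ := by rw [mul_inv_cancel₀ (by linarith : (2+(m:ℝ)) ≠ 0)]
      _ ≤ (2+(m:ℝ)) * Real.exp (-x) := mul_le_mul_of_nonneg_left h2 (by linarith)
  · push_neg at hcase
    have hx3 : Real.log 3 < x := by
      refine lt_of_le_of_lt ?_ hcase
      exact Real.log_le_log (by norm_num) (by linarith)
    have hlog3 : (1:ℝ) < Real.log 3 := by
      have h3 : Real.exp 1 < 3 := lt_of_lt_of_le Real.exp_one_lt_d9 (by norm_num)
      calc (1:ℝ) = Real.log (Real.exp 1) := (Real.log_exp 1).symm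
        _ < Real.log 3 := Real.log_lt_log (Real.exp_pos 1) h3
    by_cases hsp : m = 1 ∧ Real.log n ≤ x
    · obtain ⟨hm1, hxn⟩ := hsp
      have hb0 : b ≤ 0 := by
        rw [hb]
        apply mul_nonpos_of_nonneg_of_nonpos hn0.le
        linarith
      have hEm0 : (μ Em).toReal = 0 := by
        have hempty : Em = ∅ := by
          rw [hEm]
          refine Set.eq_empty_iff_forall_notMem.mpr (fun ω hω => ?_)
          simp only [Set.mem_setOf_eq] at hω
          have h0Y : (0:ℝ) ≤ ((Y ω : ℕ):ℝ) := Nat.cast_nonneg _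
          linarith
        rw [hempty]
        simp
      have hcrude : (n:ℝ) * q^T ≤ 2 * Real.exp (-x) := by
        rw [hgen T]
        have h5 : a * (1/(n:ℝ)) ≤ a * c := by
          apply mul_le_mul_of_nonneg_left _ ha0
          have h5' : (0:ℝ) < 1/(2*(n:ℝ)^2) := by positivity
          linarith
        have h6 : a * (1/(n:ℝ)) = z := by rw [ha]; field_simp
        have h7 : (a - 1)*c ≤ (T:ℝ)*c := mul_le_mul_of_nonneg_right hTa hc0.le
        have h8 : Real.log n - (T:ℝ)*c ≤ -x + c := by
          have h8a : z ≤ a * c := h6 ▸ h5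
          have h8b : (a-1)*c = a*c - c := by ring
          have h8c : z - c ≤ (T:ℝ)*c := by linarith
          rw [hz] at h8c
          linarith
        calc Real.exp (Real.log n - (T:ℝ)*c) ≤ Real.exp (-x + c) := Real.exp_le_exp.mpr h8
          _ = Real.exp (-x) * Real.exp c := by rw [Real.exp_add]
          _ = Real.exp (-x) * ((n:ℝ)/((n:ℝ)-1)) := by rw [hexpc]
          _ ≤ 2 * Real.exp (-x) := by
              have h9 : (n:ℝ)/((n:ℝ)-1) ≤ 2 := by
                rw [div_le_iff₀ (by linarith : (0:ℝ) < (n:ℝ)-1)]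
                linarith
              nlinarith [Real.exp_pos (-x)]
      have hfin : (μ Ep).toReal ≤ 2 * Real.exp (-x) := by
        refine hup.trans ?_
        rw [hm1]
        push_cast
        rw [one_mul]
        exact hcrude
      have hmcast : (m:ℝ) = 1 := by rw [hm1]; norm_num
      calc (μ {ω | x < |((Y ω : ℕ) : ℝ) / n - Real.log n|}).toReal
          ≤ (μ Ep).toReal + (μ Em).toReal := hcomb
        _ ≤ 2 * Real.exp (-x) + 0 := by rw [hEm0]; exact add_le_add hfin (le_refl 0)
        _ ≤ (2+(m:ℝ)) * Real.exp (-x) := by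
            rw [hmcast]
            nlinarith [Real.exp_pos (-x)]
    · have hstar : z ≤ ((n:ℝ)*z - 1) * c := by
        by_cases hn2 : n = 2
        · subst hn2
          have hc2 : c = Real.log 2 := by
            rw [hc]
            norm_num
          have hm2 : 2 ≤ m := by
            rcases Nat.eq_or_lt_of_le hm with h | h
            · exfalso
              apply hsp
              refine ⟨h.symm, ?_⟩
              have : Real.log ((2:ℕ):ℝ) ≤ Real.log 3 := Real.log_le_log (by norm_num) (by norm_num)
              linarith
            · omega
          have hm2R : (4:ℝ) ≤ 2 + (m:ℝ) := by
            have : (2:ℝ) ≤ (m:ℝ) := by exact_mod_cast hm2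
            linarith
          have hlog4 : Real.log 4 ≤ Real.log (2+(m:ℝ)) := Real.log_le_log (by norm_num) hm2R
          have hlog4sq : Real.log 4 = 2 * Real.log 2 := by
            rw [show (4:ℝ) = 2^2 by norm_num, Real.log_pow]
            norm_num
          have hz3 : 3 * Real.log 2 ≤ z := by
            rw [hz]
            have : Real.log ((2:ℕ):ℝ) = Real.log 2 := by norm_num
            linarith
          have hL := Real.log_two_gt_d9
          have h2L : (0:ℝ) ≤ 2*Real.log 2 - 1 := by linarith
          have hprod := mul_le_mul_of_nonneg_right hz3 h2L
          have hkey3 : Real.log 2 ≤ 3*Real.log 2 * (2*Real.log 2 - 1) := by nlinarith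
          rw [hc2]
          have hncast : ((2:ℕ):ℝ) = 2 := by norm_num
          rw [hncast]
          nlinarith [hprod, hkey3]
        · have hn3 : 3 ≤ n := by omega
          have hn3R : (3:ℝ) ≤ (n:ℝ) := by exact_mod_cast hn3
          have h2n : 2 + 1/(n:ℝ) ≤ z := by
            by_cases hm1 : m = 1
            · have hxn : x < Real.log n := by
                by_contra hcon
                push_neg at hcon
                exact hsp ⟨hm1, hcon⟩
              have hn4 : 4 ≤ n := by
                by_contra hcon
                have hn3' : n = 3 := by omega
                rw [hn3'] at hxn
                have : Real.log ((3:ℕ):ℝ) = Real.log 3 := by norm_num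
                linarith
              have hn4R : (4:ℝ) ≤ (n:ℝ) := by exact_mod_cast hn4
              have h12 : Real.log 12 ≤ Real.log (3*(n:ℝ)) :=
                Real.log_le_log (by norm_num) (by linarith)
              have hmul : Real.log (3*(n:ℝ)) = Real.log 3 + Real.log n :=
                Real.log_mul (by norm_num) (by linarith)
              have hinv : 1/(n:ℝ) ≤ 1/4 := by
                rw [div_le_div_iff₀ (by linarith) (by norm_num)]
                linarith
              rw [hz]
              linarith [log_twelve_ge]
            · have hm2 : 2 ≤ m := by omega
              have hm2R : (4:ℝ) ≤ 2 + (m:ℝ) := by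
                have : (2:ℝ) ≤ (m:ℝ) := by exact_mod_cast hm2
                linarith
              have hlog4 : Real.log 4 ≤ Real.log (2+(m:ℝ)) := Real.log_le_log (by norm_num) hm2R
              have h12 : Real.log 12 ≤ Real.log (4*(n:ℝ)) :=
                Real.log_le_log (by norm_num) (by linarith)
              have hmul : Real.log (4*(n:ℝ)) = Real.log 4 + Real.log n :=
                Real.log_mul (by norm_num) (by linarith)
              have hinv : 1/(n:ℝ) ≤ 1/3 := by
                rw [div_le_div_iff₀ (by linarith) (by norm_num)]
                linarith
              rw [hz]
              linarith [log_twelve_ge]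
          have hnz1 : 0 ≤ (n:ℝ)*z - 1 := by nlinarith [h2n, hnR, hn0]
          calc z ≤ ((n:ℝ)*z - 1) * (1/(n:ℝ) + 1/(2*(n:ℝ)^2)) := by
                have e1 : ((n:ℝ)*z - 1) * (1/(n:ℝ) + 1/(2*(n:ℝ)^2))
                    = z + z/(2*(n:ℝ)) - 1/(n:ℝ) - 1/(2*(n:ℝ)^2) := by
                  field_simp
                  ring
                rw [e1]
                have e2 : 2 + 1/(n:ℝ) ≤ z := h2n
                have e3 : (2 + 1/(n:ℝ))/(2*(n:ℝ)) ≤ z/(2*(n:ℝ)) := by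
                  gcongr
                have e4 : (2 + 1/(n:ℝ))/(2*(n:ℝ)) = 1/(n:ℝ) + 1/(2*(n:ℝ)^2) := by
                  field_simp
                linarith
            _ ≤ ((n:ℝ)*z - 1) * c := mul_le_mul_of_nonneg_left hcl hnz1
      have hstarexp : (n:ℝ) * q^T ≤ Real.exp (-x) := by
        rw [hgen T]
        have h7 : (a - 1)*c ≤ (T:ℝ)*c := mul_le_mul_of_nonneg_right hTa hc0.le
        have h8 : Real.log n - (T:ℝ)*c ≤ -x := by
          have h9 : (a - 1) * c = ((n:ℝ)*z - 1)*c - 0 := by rw [ha]; ring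
          have h10 : z ≤ (T:ℝ)*c := by linarith
          rw [hz] at h10
          linarith
        exact Real.exp_le_exp.mpr h8
      have hm0 : (0:ℝ) ≤ (m:ℝ) := by positivity
      have hEp2 : (μ Ep).toReal ≤ (m:ℝ) * Real.exp (-x) :=
        hup.trans (mul_le_mul_of_nonneg_left hstarexp hm0)
      calc (μ {ω | x < |((Y ω : ℕ) : ℝ) / n - Real.log n|}).toReal
          ≤ (μ Ep).toReal + (μ Em).toReal := hcomb
        _ ≤ (m:ℝ) * Real.exp (-x) + 2 * Real.exp (-x) := add_le_add hEp2 hlow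
        _ = (2+(m:ℝ)) * Real.exp (-x) := by ring
end

section
/- Let X ~ CCP(n, ℓ) be the number of uniform draws from [n] needed to see every element at least ℓ times, with ℓ fixed. Then there exists a constant C_0 = C_0(ℓ) such that for all n ≥ 2 and all x ≥ 0, Pr[X > n(ln n + (ℓ−1) ln ln n + x)] ≤ C_0 e^{-x/2}. -/
open MeasureTheory ProbabilityTheory Finset

/-- The `ℓ`-copies coupon collector time: the first time `t` such that every coupon in
`Fin n` has appeared at least `ℓ` times among the draws `d 0, ..., d (t-1)`. -/
noncomputable def coverTimeMul {Ω : Type} {n : ℕ} (ℓ : ℕ) (d : ℕ → Ω → Fin n) (ω : Ω) : ℕ :=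
  sInf {t | ∀ j : Fin n, ℓ ≤ ((Finset.range t).filter (fun s => d s ω = j)).card}

private lemma pow_le_exp_aux (m : ℕ) (y : ℝ) (hy : 0 ≤ y) :
    y ^ m ≤ 4 ^ m * m.factorial * Real.exp (y / 4) := by
  have h1 : (y / 4) ^ m / m.factorial ≤ Real.exp (y / 4) :=
    Real.pow_div_factorial_le_exp (y/4) (by positivity) m
  have hf : (0:ℝ) < m.factorial := by positivity
  rw [div_le_iff₀ hf] at h1
  have h2 : y ^ m = 4 ^ m * (y / 4) ^ m := by
    rw [← mul_pow]; ring_nf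
  rw [h2]
  calc (4:ℝ) ^ m * (y/4) ^ m ≤ 4 ^ m * (Real.exp (y/4) * m.factorial) := by
        apply mul_le_mul_of_nonneg_left h1 (by positivity)
    _ = 4 ^ m * m.factorial * Real.exp (y/4) := by ring

private lemma real_chain (ℓ : ℕ) (hℓ : 1 ≤ ℓ) (n t : ℕ) (hn : 2 ≤ n) (x : ℝ) (hx : 0 ≤ x)
    (hu1 : (t:ℝ) * (n:ℝ)⁻¹ ≤ ℓ * Real.log n + x)
    (hu2 : Real.log n + ((ℓ:ℝ)-1) * Real.log (Real.log n) + x - 1 ≤ (t:ℝ) * (n:ℝ)⁻¹) :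
    (n:ℝ) * ∑ k ∈ Finset.range ℓ, (t.choose k : ℝ) * ((n:ℝ)⁻¹)^k * (1-(n:ℝ)⁻¹)^(t-k)
      ≤ (ℓ:ℝ) * ((ℓ-1).factorial) * 4^(ℓ-1) * Real.exp ((5*ℓ+6)/4) * Real.exp (-x/2) := by
  set m : ℕ := ℓ - 1 with hm
  have hℓm : (ℓ:ℝ) = (m:ℝ) + 1 := by
    rw [hm]; push_cast [Nat.cast_sub hℓ]; ring
  have hN2 : (2:ℝ) ≤ (n:ℝ) := by exact_mod_cast hn
  have hN0 : (0:ℝ) < n := by linarith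
  set p : ℝ := (n:ℝ)⁻¹ with hp
  have hp0 : 0 < p := by positivity
  have hp1 : p ≤ 1 := by
    rw [hp]
    have h1 : (1:ℝ) ≤ n := by linarith
    rw [inv_le_one₀ hN0]; exact h1
  have hq0 : 0 ≤ 1 - p := by linarith
  set u : ℝ := (t:ℝ) * p with hu
  have hu0 : 0 ≤ u := by positivity
  have hlog2 : (1/2 : ℝ) < Real.log 2 := by
    have := Real.log_two_gt_d9; linarith
  have hln : (1/2:ℝ) < Real.log n := by
    calc (1/2:ℝ) < Real.log 2 := hlog2
      _ ≤ Real.log n := Real.log_le_log (by norm_num) hN2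
  have hln0 : 0 < Real.log n := by linarith
  -- Step: each q^(t-k) ≤ exp ℓ * exp (-u) for k < ℓ
  have hqpow : ∀ k ∈ Finset.range ℓ, (1-p)^(t-k) ≤ Real.exp ℓ * Real.exp (-u) := by
    intro k hk
    have hk' : k ≤ ℓ := (Finset.mem_range.mp hk).le
    have h1 : (1-p) ≤ Real.exp (-p) := by
      have := Real.add_one_le_exp (-p); linarith
    have h2 : (1-p)^(t-k) ≤ Real.exp (-p) ^ (t-k) := pow_le_pow_left₀ hq0 h1 _
    have h3 : Real.exp (-p) ^ (t-k) = Real.exp (-(p * (t-k:ℕ))) := by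
      rw [← Real.exp_nat_mul]; ring_nf
    have h4 : (t:ℝ) - k ≤ ((t-k:ℕ):ℝ) := by
      rcases le_total k t with h | h
      · rw [Nat.cast_sub h]
      · have : t - k = 0 := Nat.sub_eq_zero_of_le h
        rw [this]; push_cast
        have : (t:ℝ) ≤ k := by exact_mod_cast h
        linarith
    have h5 : -(p * ((t-k:ℕ):ℝ)) ≤ ℓ - u := by
      have hpk : p * k ≤ ℓ := by
        have h6 : p * k ≤ 1 * k := by
          apply mul_le_mul_of_nonneg_right hp1 (by positivity)
        have : (k:ℝ) ≤ ℓ := by exact_mod_cast hk'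
        linarith
      have := mul_le_mul_of_nonneg_left h4 hp0.le
      rw [hu]; nlinarith
    calc (1-p)^(t-k) ≤ Real.exp (-(p * (t-k:ℕ))) := h3 ▸ h2
      _ ≤ Real.exp (ℓ - u) := Real.exp_le_exp.mpr h5
      _ = Real.exp ℓ * Real.exp (-u) := by rw [← Real.exp_add]; ring_nf
  -- Step: choose * p^k ≤ (u+1)^m
  have hcp : ∀ k ∈ Finset.range ℓ, (t.choose k : ℝ) * p^k ≤ (u+1)^m := by
    intro k hk
    have hk' : k ≤ m := by
      have := Finset.mem_range.mp hk; omega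
    have h1 : (t.choose k : ℝ) ≤ (t:ℝ)^k / k.factorial := by
      have := Nat.choose_le_pow_div (α := ℝ) k t
      simpa using this
    have hfk : (1:ℝ) ≤ k.factorial := by exact_mod_cast k.factorial_pos
    have h2 : (t.choose k : ℝ) * p^k ≤ (t:ℝ)^k * p^k := by
      calc (t.choose k : ℝ) * p^k ≤ ((t:ℝ)^k / k.factorial) * p^k := by
            apply mul_le_mul_of_nonneg_right h1 (by positivity)
        _ ≤ (t:ℝ)^k * p^k := by
            apply mul_le_mul_of_nonneg_right _ (by positivity)
            apply div_le_self (by positivity) hfk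
    have h3 : (t:ℝ)^k * p^k = u^k := by rw [hu, mul_pow]
    have h4 : u^k ≤ (u+1)^m := by
      calc u^k ≤ (u+1)^k := pow_le_pow_left₀ hu0 (by linarith) _
        _ ≤ (u+1)^m := pow_le_pow_right₀ (by linarith) hk'
    linarith [h3 ▸ h2]
  -- sum bound
  have hsum : ∑ k ∈ Finset.range ℓ, (t.choose k : ℝ) * p^k * (1-p)^(t-k)
      ≤ (ℓ:ℝ) * ((u+1)^m * (Real.exp ℓ * Real.exp (-u))) := by
    calc ∑ k ∈ Finset.range ℓ, (t.choose k : ℝ) * p^k * (1-p)^(t-k)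
        ≤ ∑ _k ∈ Finset.range ℓ, (u+1)^m * (Real.exp ℓ * Real.exp (-u)) := by
          apply Finset.sum_le_sum
          intro k hk
          have := mul_le_mul (hcp k hk) (hqpow k hk) (by positivity) (by positivity)
          linarith
      _ = (ℓ:ℝ) * ((u+1)^m * (Real.exp ℓ * Real.exp (-u))) := by
          rw [Finset.sum_const, Finset.card_range]; ring
  -- N * exp(-u) ≤ e * exp(-x) / (log n)^m
  have hNu : (n:ℝ) * Real.exp (-u) ≤ Real.exp 1 * Real.exp (-x) / (Real.log n)^m := by
    have h1 : -u ≤ 1 - (Real.log n + (m:ℝ) * Real.log (Real.log n) + x) := by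
      rw [hℓm] at hu2; linarith
    have h2 : Real.exp (-u) ≤ Real.exp 1 * Real.exp (- Real.log n) *
        Real.exp (-((m:ℝ) * Real.log (Real.log n))) * Real.exp (-x) := by
      rw [← Real.exp_add, ← Real.exp_add, ← Real.exp_add]
      apply Real.exp_le_exp.mpr; linarith
    have h3 : Real.exp (- Real.log n) = (n:ℝ)⁻¹ := by
      rw [Real.exp_neg, Real.exp_log hN0]
    have h4 : Real.exp (-((m:ℝ) * Real.log (Real.log n))) = ((Real.log n)^m)⁻¹ := by
      rw [Real.exp_neg, Real.exp_nat_mul, Real.exp_log hln0]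
    rw [h3, h4] at h2
    have h5 : (n:ℝ) * (Real.exp 1 * (n:ℝ)⁻¹ * ((Real.log n)^m)⁻¹ * Real.exp (-x))
        = Real.exp 1 * Real.exp (-x) / (Real.log n)^m := by
      field_simp
    calc (n:ℝ) * Real.exp (-u) ≤ (n:ℝ) * (Real.exp 1 * (n:ℝ)⁻¹ * ((Real.log n)^m)⁻¹ * Real.exp (-x)) := by
          apply mul_le_mul_of_nonneg_left h2 (by positivity)
      _ = _ := h5
  -- (u+1)^m / (log n)^m ≤ (ℓ + 2x + 2)^m
  have hratio : (u+1)^m / (Real.log n)^m ≤ ((ℓ:ℝ) + 2*x + 2)^m := by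
    rw [← div_pow]
    apply pow_le_pow_left₀ (by positivity)
    rw [div_le_iff₀ (by positivity)]
    have hxx : x + 1 ≤ 2 * (x+1) * Real.log n := by nlinarith
    linarith [hu1, hxx]
  have hfin : ((ℓ:ℝ) + 2*x + 2)^m ≤ 4^m * m.factorial * Real.exp (((ℓ:ℝ)+2)/4) * Real.exp (x/2) := by
    calc ((ℓ:ℝ) + 2*x + 2)^m ≤ 4^m * m.factorial * Real.exp (((ℓ:ℝ) + 2*x + 2)/4) :=
          pow_le_exp_aux m _ (by positivity)
      _ = 4^m * m.factorial * Real.exp (((ℓ:ℝ)+2)/4) * Real.exp (x/2) := by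
          rw [mul_assoc, mul_assoc, ← Real.exp_add]; ring_nf
  -- final assembly
  have hmain : (n:ℝ) * ∑ k ∈ Finset.range ℓ, (t.choose k : ℝ) * p^k * (1-p)^(t-k)
      ≤ (ℓ:ℝ) * Real.exp ℓ * ((u+1)^m / (Real.log n)^m) * ((n:ℝ) * Real.exp (-u)) * (Real.log n)^m := by
    have : (ℓ:ℝ) * ((u+1)^m * (Real.exp ℓ * Real.exp (-u))) * (n:ℝ)
        = (ℓ:ℝ) * Real.exp ℓ * ((u+1)^m / (Real.log n)^m) * ((n:ℝ) * Real.exp (-u)) * (Real.log n)^m := by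
      field_simp
    calc (n:ℝ) * ∑ k ∈ Finset.range ℓ, (t.choose k : ℝ) * p^k * (1-p)^(t-k)
        ≤ (n:ℝ) * ((ℓ:ℝ) * ((u+1)^m * (Real.exp ℓ * Real.exp (-u)))) := by
          apply mul_le_mul_of_nonneg_left hsum (by positivity)
      _ = (ℓ:ℝ) * ((u+1)^m * (Real.exp ℓ * Real.exp (-u))) * (n:ℝ) := by ring
      _ = _ := this
  have hexp : Real.exp (ℓ:ℝ) * Real.exp (((ℓ:ℝ)+2)/4) * Real.exp (x/2) * Real.exp 1 * Real.exp (-x)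
      = Real.exp ((5*(ℓ:ℝ)+6)/4) * Real.exp (-x/2) := by
    rw [← Real.exp_add, ← Real.exp_add, ← Real.exp_add, ← Real.exp_add, ← Real.exp_add]
    congr 1; ring
  calc (n:ℝ) * ∑ k ∈ Finset.range ℓ, (t.choose k : ℝ) * p^k * (1-p)^(t-k)
      ≤ (ℓ:ℝ) * Real.exp ℓ * ((u+1)^m / (Real.log n)^m) * ((n:ℝ) * Real.exp (-u)) * (Real.log n)^m := hmain
    _ ≤ (ℓ:ℝ) * Real.exp ℓ * (((ℓ:ℝ) + 2*x + 2)^m) * (Real.exp 1 * Real.exp (-x) / (Real.log n)^m) * (Real.log n)^m := by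
        gcongr
    _ = (ℓ:ℝ) * Real.exp ℓ * (((ℓ:ℝ) + 2*x + 2)^m) * (Real.exp 1 * Real.exp (-x)) := by
        field_simp
    _ ≤ (ℓ:ℝ) * Real.exp ℓ * (4^m * m.factorial * Real.exp (((ℓ:ℝ)+2)/4) * Real.exp (x/2)) * (Real.exp 1 * Real.exp (-x)) := by
        gcongr
    _ = (ℓ:ℝ) * (m.factorial:ℝ) * 4^m *
        (Real.exp (ℓ:ℝ) * Real.exp (((ℓ:ℝ)+2)/4) * Real.exp (x/2) * Real.exp 1 * Real.exp (-x)) := by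
        ring
    _ = (ℓ:ℝ) * (m.factorial:ℝ) * 4^m * (Real.exp ((5*(ℓ:ℝ)+6)/4) * Real.exp (-x/2)) := by
        rw [hexp]
    _ = (ℓ:ℝ) * ((ℓ-1).factorial) * 4^(ℓ-1) * Real.exp ((5*ℓ+6)/4) * Real.exp (-x/2) := by
        rw [hm]; push_cast; ring


/-- For `X ~ CCP(n, ℓ)` with `ℓ` fixed, there is `C₀ = C₀(ℓ)` such that for
all `n ≥ 2` and `x ≥ 0`, `Pr[X > n(ln n + (ℓ−1) ln ln n + x)] ≤ C₀ e^{-x/2}`. -/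
theorem ccp_multi_right_tail (ℓ : ℕ) (hℓ : 1 ≤ ℓ) :
    ∃ C₀ : ℝ, 0 < C₀ ∧
      ∀ (n : ℕ), 2 ≤ n →
      ∀ (Ω : Type) (_ : MeasurableSpace Ω) (μ : Measure Ω), IsProbabilityMeasure μ →
      ∀ (d : ℕ → Ω → Fin n), (∀ t, Measurable (d t)) →
        (∀ t j, μ {ω | d t ω = j} = (n : ENNReal)⁻¹) →
        iIndepFun d μ →
        ∀ x : ℝ, 0 ≤ x →
          (μ {ω | (n : ℝ) * (Real.log n + (ℓ - 1) * Real.log (Real.log n) + x)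
              < (coverTimeMul ℓ d ω : ℝ)}).toReal ≤ C₀ * Real.exp (-x / 2) := by
  refine ⟨(ℓ:ℝ) * ((ℓ-1).factorial) * 4^(ℓ-1) * Real.exp ((5*ℓ+6)/4), by positivity, ?_⟩
  intro n hn Ω mΩ μ hμ d hmeas hunif hindep x hx
  haveI := hμ
  have hN2 : (2:ℝ) ≤ (n:ℝ) := by exact_mod_cast hn
  have hN0 : (0:ℝ) < n := by linarith
  set L : ℝ := Real.log n + ((ℓ:ℝ) - 1) * Real.log (Real.log n) + x with hL
  set T : ℝ := (n:ℝ) * L with hT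
  set t : ℕ := Nat.floor T with ht

  -- Step A: inclusion
  have hsub : {ω | T < (coverTimeMul ℓ d ω : ℝ)} ⊆
      ⋃ j : Fin n, ⋃ k ∈ Finset.range ℓ, ⋃ S ∈ Finset.powersetCard k (Finset.range t),
        ⋂ s ∈ Finset.range t, d s ⁻¹' (if s ∈ S then {j} else ({j}ᶜ : Set (Fin n))) := by
    intro ω hω
    simp only [Set.mem_setOf_eq] at hω
    have hj : ∃ j : Fin n, ((Finset.range t).filter (fun s => d s ω = j)).card < ℓ := by
      by_contra hcon
      push_neg at hcon
      have hmem : t ∈ {t' | ∀ j : Fin n, ℓ ≤ ((Finset.range t').filter (fun s => d s ω = j)).card} :=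
        hcon
      have hXle : coverTimeMul ℓ d ω ≤ t := Nat.sInf_le hmem
      rcases le_or_gt 0 T with h0 | h0
      · have h1 : (t:ℝ) ≤ T := ht ▸ Nat.floor_le h0
        have h2 : (coverTimeMul ℓ d ω : ℝ) ≤ t := by exact_mod_cast hXle
        linarith
      · have ht0 : t = 0 := by rw [ht]; exact Nat.floor_of_nonpos h0.le
        have h3 := hcon ⟨0, by omega⟩
        rw [ht0] at h3
        simp at h3
        omega
    obtain ⟨j, hj⟩ := hj
    refine Set.mem_iUnion.mpr ⟨j, ?_⟩
    refine Set.mem_iUnion₂.mpr ⟨((Finset.range t).filter (fun s => d s ω = j)).card,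
      Finset.mem_range.mpr hj, ?_⟩
    refine Set.mem_iUnion₂.mpr ⟨(Finset.range t).filter (fun s => d s ω = j),
      Finset.mem_powersetCard.mpr ⟨Finset.filter_subset _ _, rfl⟩, ?_⟩
    refine Set.mem_iInter₂.mpr ?_
    intro s hs
    split_ifs with hmem
    · simpa using (Finset.mem_filter.mp hmem).2
    · simp only [Set.mem_preimage, Set.mem_compl_iff, Set.mem_singleton_iff]
      exact fun h => hmem (Finset.mem_filter.mpr ⟨hs, h⟩)
  -- Step C: measure of intersection
  have hE : ∀ (j : Fin n) (S : Finset ℕ), S ⊆ Finset.range t →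
      μ (⋂ s ∈ Finset.range t, d s ⁻¹' (if s ∈ S then {j} else ({j}ᶜ : Set (Fin n)))) =
        ((n:ENNReal)⁻¹)^S.card * (1-(n:ENNReal)⁻¹)^(t - S.card) := by
    intro j S hS
    rw [hindep.measure_inter_preimage_eq_mul (Finset.range t)
      (sets := fun s => if s ∈ S then ({j} : Set (Fin n)) else {j}ᶜ)
      (fun i _ => by
        split_ifs
        · exact measurableSet_singleton j
        · exact (measurableSet_singleton j).compl)]
    have hone : ∀ s : ℕ, μ (d s ⁻¹' ({j} : Set (Fin n))) = (n:ENNReal)⁻¹ := by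
      intro s
      have hpre : d s ⁻¹' ({j} : Set (Fin n)) = {ω | d s ω = j} := by
        ext ω; simp
      rw [hpre]; exact hunif s j
    have htwo : ∀ s : ℕ, μ (d s ⁻¹' ({j}ᶜ : Set (Fin n))) = 1 - (n:ENNReal)⁻¹ := by
      intro s
      rw [Set.preimage_compl,
        measure_compl ((hmeas s) (measurableSet_singleton j)) (measure_ne_top μ _),
        measure_univ, hone]
    rw [← Finset.prod_sdiff hS]
    have hA : ∏ s ∈ S, μ (d s ⁻¹' (if s ∈ S then ({j}:Set (Fin n)) else {j}ᶜ))
        = ((n:ENNReal)⁻¹)^S.card := by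
      rw [Finset.prod_congr rfl (fun s hs => by rw [if_pos hs, hone]), Finset.prod_const]
    have hB : ∏ s ∈ Finset.range t \ S, μ (d s ⁻¹' (if s ∈ S then ({j}:Set (Fin n)) else {j}ᶜ))
        = (1-(n:ENNReal)⁻¹)^(t - S.card) := by
      rw [Finset.prod_congr rfl (fun s hs => by rw [if_neg (Finset.mem_sdiff.mp hs).2, htwo]),
        Finset.prod_const, Finset.card_sdiff_of_subset hS, Finset.card_range]
    rw [hA, hB, mul_comm]
  -- Step D: union bound
  set pE : ENNReal := (n:ENNReal)⁻¹ with hpE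
  have hkey : μ {ω | T < (coverTimeMul ℓ d ω : ℝ)} ≤
      (n : ENNReal) * ∑ k ∈ Finset.range ℓ, (t.choose k : ENNReal) * (pE^k * (1-pE)^(t-k)) := by
    have h1 : μ {ω | T < (coverTimeMul ℓ d ω : ℝ)} ≤
        ∑ j : Fin n, ∑ k ∈ Finset.range ℓ, ∑ S ∈ Finset.powersetCard k (Finset.range t),
          μ (⋂ s ∈ Finset.range t, d s ⁻¹' (if s ∈ S then {j} else ({j}ᶜ : Set (Fin n)))) := by
      refine (measure_mono hsub).trans ?_
      refine (measure_iUnion_fintype_le μ _).trans ?_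
      refine Finset.sum_le_sum (fun j _ => ?_)
      refine (measure_biUnion_finset_le _ _).trans ?_
      refine Finset.sum_le_sum (fun k _ => ?_)
      exact measure_biUnion_finset_le _ _
    refine h1.trans ?_
    have h2 : ∀ j : Fin n, ∑ k ∈ Finset.range ℓ, ∑ S ∈ Finset.powersetCard k (Finset.range t),
        μ (⋂ s ∈ Finset.range t, d s ⁻¹' (if s ∈ S then {j} else ({j}ᶜ : Set (Fin n))))
        = ∑ k ∈ Finset.range ℓ, (t.choose k : ENNReal) * (pE^k * (1-pE)^(t-k)) := by
      intro j
      refine Finset.sum_congr rfl (fun k _ => ?_)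
      have h3 : ∀ S ∈ Finset.powersetCard k (Finset.range t),
          μ (⋂ s ∈ Finset.range t, d s ⁻¹' (if s ∈ S then {j} else ({j}ᶜ : Set (Fin n))))
          = pE^k * (1-pE)^(t-k) := by
        intro S hSk
        obtain ⟨hsub', hcard⟩ := Finset.mem_powersetCard.mp hSk
        rw [hE j S hsub', hcard, hpE]
      rw [Finset.sum_congr rfl h3, Finset.sum_const, Finset.card_powersetCard, Finset.card_range,
        nsmul_eq_mul]
    rw [Finset.sum_congr rfl (fun j _ => h2 j), Finset.sum_const, Finset.card_univ,
      Fintype.card_fin, nsmul_eq_mul]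
  -- toReal conversions
  have hq1 : pE ≤ 1 := by
    rw [hpE]
    exact ENNReal.inv_le_one.mpr (by exact_mod_cast (by omega : 1 ≤ n))
  have hpE_ne : pE ≠ ⊤ := ne_top_of_le_ne_top ENNReal.one_ne_top hq1
  have hqE_ne : (1 - pE) ≠ ⊤ := ne_top_of_le_ne_top ENNReal.one_ne_top tsub_le_self
  have hterm_ne : ∀ k, (t.choose k : ENNReal) * (pE^k * (1-pE)^(t-k)) ≠ ⊤ := fun k =>
    ENNReal.mul_ne_top (ENNReal.natCast_ne_top _)
      (ENNReal.mul_ne_top (ENNReal.pow_ne_top hpE_ne) (ENNReal.pow_ne_top hqE_ne))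
  have hRHS_ne : (n : ENNReal) * ∑ k ∈ Finset.range ℓ, (t.choose k : ENNReal) *
      (pE^k * (1-pE)^(t-k)) ≠ ⊤ := by
    refine ENNReal.mul_ne_top (ENNReal.natCast_ne_top _) ?_
    rw [← lt_top_iff_ne_top]
    exact ENNReal.sum_lt_top.mpr (fun k _ => lt_top_iff_ne_top.mpr (hterm_ne k))
  have hpEtoReal : pE.toReal = (n:ℝ)⁻¹ := by
    rw [hpE, ENNReal.toReal_inv, ENNReal.toReal_natCast]
  have hqEtoReal : (1-pE).toReal = 1 - (n:ℝ)⁻¹ := by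
    rw [ENNReal.toReal_sub_of_le hq1 ENNReal.one_ne_top, ENNReal.toReal_one, hpEtoReal]
  have htoReal : ((n : ENNReal) * ∑ k ∈ Finset.range ℓ, (t.choose k : ENNReal) *
        (pE^k * (1-pE)^(t-k))).toReal
      = (n:ℝ) * ∑ k ∈ Finset.range ℓ, (t.choose k : ℝ) * ((n:ℝ)⁻¹)^k * (1-(n:ℝ)⁻¹)^(t-k) := by
    rw [ENNReal.toReal_mul, ENNReal.toReal_natCast,
      ENNReal.toReal_sum (fun k _ => hterm_ne k)]
    congr 1
    refine Finset.sum_congr rfl (fun k _ => ?_)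
    rw [ENNReal.toReal_mul, ENNReal.toReal_mul, ENNReal.toReal_natCast, ENNReal.toReal_pow,
      ENNReal.toReal_pow, hpEtoReal, hqEtoReal, ← mul_assoc]
  have hfinal := ENNReal.toReal_mono hRHS_ne hkey
  rw [htoReal] at hfinal
  have hln0 : 0 < Real.log n := by
    have h1 : (0:ℝ) < Real.log 2 := Real.log_pos (by norm_num)
    have h2 := Real.log_le_log (by norm_num : (0:ℝ) < 2) hN2
    linarith
  have hu1 : (t:ℝ) * (n:ℝ)⁻¹ ≤ (ℓ:ℝ) * Real.log n + x := by
    have hll : Real.log (Real.log n) ≤ Real.log n := Real.log_le_self hln0.le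
    have hℓ1 : (0:ℝ) ≤ (ℓ:ℝ) - 1 := by
      have : (1:ℝ) ≤ ℓ := by exact_mod_cast hℓ
      linarith
    have hLle : L ≤ (ℓ:ℝ) * Real.log n + x := by
      rw [hL]
      nlinarith [mul_le_mul_of_nonneg_left hll hℓ1]
    rcases le_or_gt 0 T with h0 | h0
    · have h1 : (t:ℝ) ≤ T := ht ▸ Nat.floor_le h0
      have h2 : (t:ℝ) * (n:ℝ)⁻¹ ≤ T * (n:ℝ)⁻¹ := mul_le_mul_of_nonneg_right h1 (by positivity)
      have h3 : T * (n:ℝ)⁻¹ = L := by rw [hT]; field_simp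
      linarith
    · have ht0 : t = 0 := by rw [ht]; exact Nat.floor_of_nonpos h0.le
      rw [ht0]
      simp only [Nat.cast_zero, zero_mul]
      positivity
  have hu2 : Real.log n + ((ℓ:ℝ) - 1) * Real.log (Real.log n) + x - 1 ≤ (t:ℝ) * (n:ℝ)⁻¹ := by
    have h1 : T - 1 ≤ (t:ℝ) := by rw [ht]; exact (Nat.sub_one_lt_floor T).le
    have h2 : (T-1) * (n:ℝ)⁻¹ ≤ (t:ℝ) * (n:ℝ)⁻¹ := mul_le_mul_of_nonneg_right h1 (by positivity)
    have h3 : (T-1) * (n:ℝ)⁻¹ = L - (n:ℝ)⁻¹ := by rw [hT]; field_simp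
    have h4 : (n:ℝ)⁻¹ ≤ 1 := by
      rw [inv_le_one₀ hN0]; linarith
    have h5 : L - 1 ≤ (t:ℝ) * (n:ℝ)⁻¹ := by linarith
    rw [hL] at h5
    exact h5
  exact hfinal.trans (real_chain ℓ hℓ n t hn x hx hu1 hu2)
end

section
/- In the balls-into-bins model where t balls are thrown independently and uniformly at random into n bins, and B_i denotes the number of balls in bin i, the random variables B_1,...,B_n are negatively associated. -/
open MeasureTheory ProbabilityTheory

/-- In the balls-into-bins model, `binCount balls ω i` is the number of balls
landing in bin `i`. -/
noncomputable def binCount {Ω : Type} {n t : ℕ} (balls : Fin t → Ω → Fin n)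
    (ω : Ω) (i : Fin n) : ℝ :=
  ((Finset.univ.filter (fun s => balls s ω = i)).card : ℝ)

/-- Count vector of a deterministic ball configuration. -/
noncomputable def binCnt {n t : ℕ} (b : Fin t → Fin n) (i : Fin n) : ℝ :=
  ((Finset.univ.filter (fun s => b s = i)).card : ℝ)

/-- Unit vector. -/
noncomputable def binUnit {n : ℕ} (k : Fin n) : Fin n → ℝ := fun i => if k = i then 1 else 0

lemma binUnit_nonneg {n : ℕ} (k i : Fin n) : 0 ≤ binUnit k i := by
  unfold binUnit; split <;> norm_num

lemma binCnt_card {n t : ℕ} (b : Fin t → Fin n) (i : Fin n) :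
    binCnt b i = ∑ s : Fin t, if b s = i then (1:ℝ) else 0 := by
  rw [Finset.sum_boole]; rfl

lemma binCnt_cons {n t : ℕ} (k : Fin n) (b : Fin t → Fin n) :
    binCnt (Fin.cons k b) = binCnt b + binUnit k := by
  funext i
  rw [Pi.add_apply, binCnt_card, Fin.sum_univ_succ, binCnt_card]
  simp only [Fin.cons_zero, Fin.cons_succ, binUnit]
  ring

lemma binCore {n : ℕ} (I J : Finset (Fin n)) (hIJ : Disjoint I J) (t : ℕ) :
    ∀ (f g : (Fin n → ℝ) → ℝ),
    (∀ v w : Fin n → ℝ, (∀ i ∈ I, v i = w i) → f v = f w) →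
    (∀ v w : Fin n → ℝ, (∀ j ∈ J, v j = w j) → g v = g w) →
    ((Monotone f ∧ Monotone g) ∨ (Antitone f ∧ Antitone g)) →
    (n:ℝ)^t * ∑ b : Fin t → Fin n, f (binCnt b) * g (binCnt b)
      ≤ (∑ b : Fin t → Fin n, f (binCnt b)) * ∑ b : Fin t → Fin n, g (binCnt b) := by
  induction t with
  | zero =>
      intro f g _ _ _
      simp [Fintype.sum_unique]
  | succ t ih =>
      intro f g hf hg hm
      -- reindexing lemma
      have hre : ∀ φ : (Fin n → ℝ) → ℝ,
          ∑ b : Fin (t+1) → Fin n, φ (binCnt b)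
            = ∑ k : Fin n, ∑ b' : Fin t → Fin n, φ (binCnt b' + binUnit k) := by
        intro φ
        rw [← (Fin.consEquiv fun _ => Fin n).sum_comp (fun b => φ (binCnt b)),
          Fintype.sum_prod_type]
        refine Finset.sum_congr rfl fun k _ => Finset.sum_congr rfl fun b' _ => ?_
        rw [show (Fin.consEquiv fun _ => Fin n) (k, b') = Fin.cons k b' from rfl, binCnt_cons]
      set F : Fin n → ℝ := fun k => ∑ b' : Fin t → Fin n, f (binCnt b' + binUnit k) with hF
      set G : Fin n → ℝ := fun k => ∑ b' : Fin t → Fin n, g (binCnt b' + binUnit k) with hG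
      have step1 : ∀ k : Fin n,
          (n:ℝ)^t * ∑ b' : Fin t → Fin n,
              f (binCnt b' + binUnit k) * g (binCnt b' + binUnit k) ≤ F k * G k := by
        intro k
        refine ih (fun v => f (v + binUnit k)) (fun v => g (v + binUnit k))
          (fun v w h => hf _ _ (fun i hi => by simp [h i hi]))
          (fun v w h => hg _ _ (fun j hj => by simp [h j hj])) ?_
        rcases hm with ⟨h1, h2⟩ | ⟨h1, h2⟩
        · exact Or.inl ⟨fun v w hvw => h1 (add_le_add_left hvw _),
            fun v w hvw => h2 (add_le_add_left hvw _)⟩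
        · exact Or.inr ⟨fun v w hvw => h1 (add_le_add_left hvw _),
            fun v w hvw => h2 (add_le_add_left hvw _)⟩
      set F₀ : ℝ := ∑ b' : Fin t → Fin n, f (binCnt b') with hF0
      set G₀ : ℝ := ∑ b' : Fin t → Fin n, g (binCnt b') with hG0
      set a : Fin n → ℝ := fun k => F k - F₀ with ha
      set c : Fin n → ℝ := fun k => G k - G₀ with hc
      have haI : ∀ k : Fin n, k ∉ I → a k = 0 := by
        intro k hk
        have : F k = F₀ := by
          refine Finset.sum_congr rfl fun b' _ => hf _ _ fun i hi => ?_
          have : binUnit k i = 0 := by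
            unfold binUnit
            rw [if_neg]; rintro rfl; exact hk hi
          simp [this]
        simp [ha, this]
      have hcJ : ∀ k : Fin n, k ∉ J → c k = 0 := by
        intro k hk
        have : G k = G₀ := by
          refine Finset.sum_congr rfl fun b' _ => hg _ _ fun j hj => ?_
          have : binUnit k j = 0 := by
            unfold binUnit
            rw [if_neg]; rintro rfl; exact hk hj
          simp [this]
        simp [hc, this]
      have hac : ∀ k : Fin n, a k * c k = 0 := by
        intro k
        by_cases hk : k ∈ I
        · rw [hcJ k (Finset.disjoint_left.mp hIJ hk), mul_zero]
        · rw [haI k hk, zero_mul]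
      have hprod : 0 ≤ (∑ k, a k) * (∑ k, c k) := by
        rcases hm with ⟨h1, h2⟩ | ⟨h1, h2⟩
        · refine mul_nonneg (Finset.sum_nonneg fun k _ => ?_)
            (Finset.sum_nonneg fun k _ => ?_)
          · simp only [ha, sub_nonneg, hF, hF0]
            exact Finset.sum_le_sum fun b' _ =>
              h1 (fun i => le_add_of_nonneg_right (binUnit_nonneg k i))
          · simp only [hc, sub_nonneg, hG, hG0]
            exact Finset.sum_le_sum fun b' _ =>
              h2 (fun i => le_add_of_nonneg_right (binUnit_nonneg k i))
        · have h1' : (∑ k, a k) ≤ 0 := Finset.sum_nonpos fun k _ => by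
            simp only [ha, sub_nonpos, hF, hF0]
            exact Finset.sum_le_sum fun b' _ =>
              h1 (fun i => le_add_of_nonneg_right (binUnit_nonneg k i))
          have h2' : (∑ k, c k) ≤ 0 := Finset.sum_nonpos fun k _ => by
            simp only [hc, sub_nonpos, hG, hG0]
            exact Finset.sum_le_sum fun b' _ =>
              h2 (fun i => le_add_of_nonneg_right (binUnit_nonneg k i))
          have := mul_nonneg (neg_nonneg.2 h1') (neg_nonneg.2 h2')
          simpa [neg_mul_neg] using this
      have hFa : ∀ k, F k = F₀ + a k := fun k => by simp [ha]
      have hGc : ∀ k, G k = G₀ + c k := fun k => by simp [hc]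
      -- single-ball inequality
      have single : (n:ℝ) * ∑ k : Fin n, F k * G k ≤ (∑ k : Fin n, F k) * ∑ k : Fin n, G k := by
        have e1 : ∑ k : Fin n, F k = n * F₀ + ∑ k, a k := by
          simp_rw [hFa]
          rw [Finset.sum_add_distrib, Finset.sum_const, Finset.card_univ, Fintype.card_fin]
          push_cast [nsmul_eq_mul]
          ring
        have e2 : ∑ k : Fin n, G k = n * G₀ + ∑ k, c k := by
          simp_rw [hGc]
          rw [Finset.sum_add_distrib, Finset.sum_const, Finset.card_univ, Fintype.card_fin]
          push_cast [nsmul_eq_mul]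
          ring
        have e3 : ∑ k : Fin n, F k * G k
            = n * (F₀ * G₀) + F₀ * (∑ k, c k) + G₀ * (∑ k, a k) := by
          have : ∀ k : Fin n, F k * G k
              = F₀ * G₀ + F₀ * c k + G₀ * a k + a k * c k := fun k => by
            rw [hFa, hGc]; ring
          simp_rw [this]
          rw [Finset.sum_add_distrib, Finset.sum_add_distrib, Finset.sum_add_distrib,
            Finset.sum_const, Finset.card_univ, Fintype.card_fin,
            ← Finset.mul_sum, ← Finset.mul_sum, Finset.sum_eq_zero (fun k _ => hac k)]
          push_cast [nsmul_eq_mul]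
          ring
        rw [e1, e2, e3]
        nlinarith [hprod]
      -- combine
      have h1 : ∑ b : Fin (t+1) → Fin n, f (binCnt b) * g (binCnt b)
          = ∑ k : Fin n, ∑ b' : Fin t → Fin n,
              f (binCnt b' + binUnit k) * g (binCnt b' + binUnit k) :=
        hre (fun v => f v * g v)
      have h2 : ∑ b : Fin (t+1) → Fin n, f (binCnt b) = ∑ k : Fin n, F k := hre f
      have h3 : ∑ b : Fin (t+1) → Fin n, g (binCnt b) = ∑ k : Fin n, G k := hre g
      rw [h1, h2, h3]
      calc (n:ℝ)^(t+1) * ∑ k : Fin n, ∑ b' : Fin t → Fin n,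
              f (binCnt b' + binUnit k) * g (binCnt b' + binUnit k)
          = ∑ k : Fin n, (n:ℝ) * ((n:ℝ)^t * ∑ b' : Fin t → Fin n,
              f (binCnt b' + binUnit k) * g (binCnt b' + binUnit k)) := by
            rw [Finset.mul_sum]; exact Finset.sum_congr rfl fun k _ => by ring
        _ ≤ ∑ k : Fin n, (n:ℝ) * (F k * G k) := by
            exact Finset.sum_le_sum fun k _ =>
              mul_le_mul_of_nonneg_left (step1 k) (Nat.cast_nonneg n)
        _ = (n:ℝ) * ∑ k : Fin n, F k * G k := by rw [Finset.mul_sum]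
        _ ≤ (∑ k : Fin n, F k) * ∑ k : Fin n, G k := single

/-- When `t` balls are thrown independently and uniformly at random into `n`
bins, the bin counts `B_1, ..., B_n` are negatively associated: for disjoint `I, J` and
functions `f, g` depending only on the coordinates in `I` resp. `J` which are both
(coordinatewise) non-decreasing or both non-increasing, `Cov(f(B), g(B)) ≤ 0`. -/
theorem balls_into_bins_negatively_associated {Ω : Type} [MeasurableSpace Ω]
    (μ : Measure Ω) [IsProbabilityMeasure μ] {n t : ℕ} (hn : 0 < n)
    (balls : Fin t → Ω → Fin n)
    (hmeas : ∀ s, Measurable (balls s))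
    (hunif : ∀ s i, μ {ω | balls s ω = i} = (n : ENNReal)⁻¹)
    (hindep : iIndepFun balls μ)
    (I J : Finset (Fin n)) (hIJ : Disjoint I J)
    (f g : (Fin n → ℝ) → ℝ)
    (hfI : ∀ v w : Fin n → ℝ, (∀ i ∈ I, v i = w i) → f v = f w)
    (hgJ : ∀ v w : Fin n → ℝ, (∀ j ∈ J, v j = w j) → g v = g w)
    (hmono : (Monotone f ∧ Monotone g) ∨ (Antitone f ∧ Antitone g)) :
    ∫ ω, f (binCount balls ω) * g (binCount balls ω) ∂μ
      ≤ (∫ ω, f (binCount balls ω) ∂μ) * ∫ ω, g (binCount balls ω) ∂μ := by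
  classical
  have hsets : ∀ b : Fin t → Fin n, MeasurableSet {ω | (fun s => balls s ω) = b} := by
    intro b
    have h1 : {ω | (fun s => balls s ω) = b} = ⋂ s, balls s ⁻¹' {b s} := by
      ext ω; simp [funext_iff]
    rw [h1]
    exact MeasurableSet.iInter fun s => (hmeas s) (measurableSet_singleton _)
  have hmeasval : ∀ b : Fin t → Fin n,
      μ {ω | (fun s => balls s ω) = b} = ((n : ENNReal)⁻¹) ^ t := by
    intro b
    have h1 : {ω | (fun s => balls s ω) = b} = ⋂ s, balls s ⁻¹' {b s} := by
      ext ω; simp [funext_iff]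
    rw [h1, hindep.meas_iInter fun s => ⟨{b s}, measurableSet_singleton _, rfl⟩]
    have h2 : ∀ s : Fin t, μ (balls s ⁻¹' {b s}) = (n : ENNReal)⁻¹ := by
      intro s
      have : balls s ⁻¹' {b s} = {ω | balls s ω = b s} := rfl
      rw [this, hunif]
    simp only [h2, Finset.prod_const, Finset.card_univ, Fintype.card_fin]
  have hint : ∀ φ : (Fin n → ℝ) → ℝ,
      ∫ ω, φ (binCount balls ω) ∂μ
        = ((n:ℝ)⁻¹) ^ t * ∑ b : Fin t → Fin n, φ (binCnt b) := by
    intro φ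
    have hfun : (fun ω => φ (binCount balls ω))
        = fun ω => ∑ b : Fin t → Fin n,
            Set.indicator {ω' | (fun s => balls s ω') = b} (fun _ => φ (binCnt b)) ω := by
      funext ω
      rw [Finset.sum_eq_single (fun s => balls s ω)]
      · rw [Set.indicator_of_mem (show ω ∈ {ω' | (fun s => balls s ω') = (fun s => balls s ω)} from rfl)]
        rfl
      · intro b _ hb
        exact Set.indicator_of_notMem (fun h => hb (by exact h.symm)) _
      · intro h
        exact absurd (Finset.mem_univ _) h
    rw [hfun, integral_finset_sum]
    · rw [Finset.mul_sum]
      refine Finset.sum_congr rfl fun b _ => ?_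
      rw [integral_indicator_const _ (hsets b), measureReal_def, hmeasval b, smul_eq_mul]
      congr 1
      simp [ENNReal.toReal_pow, ENNReal.toReal_inv]
    · intro b _
      exact (integrable_const _).indicator (hsets b)
  have A : ∫ ω, f (binCount balls ω) * g (binCount balls ω) ∂μ
      = ((n:ℝ)⁻¹) ^ t * ∑ b : Fin t → Fin n, f (binCnt b) * g (binCnt b) :=
    hint (fun v => f v * g v)
  have B : ∫ ω, f (binCount balls ω) ∂μ
      = ((n:ℝ)⁻¹) ^ t * ∑ b : Fin t → Fin n, f (binCnt b) := hint f
  have C : ∫ ω, g (binCount balls ω) ∂μ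
      = ((n:ℝ)⁻¹) ^ t * ∑ b : Fin t → Fin n, g (binCnt b) := hint g
  rw [A, B, C]
  have key := binCore I J hIJ t f g hfI hgJ hmono
  set c : ℝ := ((n:ℝ)⁻¹) ^ t with hcdef
  set P : ℝ := (n:ℝ) ^ t with hPdef
  have hP : 0 < P := pow_pos (by exact_mod_cast hn) t
  have hcP : c = P⁻¹ := by rw [hcdef, hPdef, inv_pow]
  have hcc : c * c * P = c := by rw [hcP]; field_simp
  set S : ℝ := ∑ b : Fin t → Fin n, f (binCnt b) * g (binCnt b)
  set Sf : ℝ := ∑ b : Fin t → Fin n, f (binCnt b)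
  set Sg : ℝ := ∑ b : Fin t → Fin n, g (binCnt b)
  have hcnn : 0 ≤ c * c := mul_nonneg (by positivity) (by positivity)
  calc c * S = c * c * (P * S) := by linear_combination (-S) * hcc
    _ ≤ c * c * (Sf * Sg) := mul_le_mul_of_nonneg_left key hcnn
    _ = (c * Sf) * (c * Sg) := by ring
end
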